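/- arXiv:1408.2776 — 15 statements merged into one kernel-verified Lean document; each statement's English description precedes it below -/
import Mathlib

section
/- Let (A, σ) be a difference ring whose ring of constants const(A,σ) is a field, let β ∈ A, and let σ' be the ring automorphism of the polynomial ring A[t] with σ'(a) = σ(a) for all a ∈ A and σ'(t) = t + β. Then const(A[t], σ') = const(A, σ) (i.e., every σ'-invariant polynomial is a constant polynomial whose coefficient lies in const(A,σ)) if and only if there exists no g ∈ A with σ(g) = g + β. -/
open Polynomial Finset

/-- Let `(A, σ)` be a difference ring whose ring of constants is a
field, `β ∈ A`, and `σ'` the ring automorphism of `A[t]` extending `σ` with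
`σ'(t) = t + β`.  Then `const(A[t], σ') = const(A, σ)` iff there is no `g ∈ A` with
`σ(g) = g + β`. -/
theorem stmt_0 {A : Type*} [CommRing A] [CharZero A]
    (σ : A ≃+* A)
    (hfield : ∀ c : A, σ c = c → c ≠ 0 → IsUnit c)
    (β : A)
    (σ' : Polynomial A ≃+* Polynomial A)
    (hC : ∀ a : A, σ' (Polynomial.C a) = Polynomial.C (σ a))
    (hX : σ' Polynomial.X = Polynomial.X + Polynomial.C β) :
    (∀ p : Polynomial A, σ' p = p → ∃ c : A, σ c = c ∧ p = Polynomial.C c)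
      ↔ ¬ ∃ g : A, σ g = g + β := by
  constructor
  · rintro h ⟨g, hg⟩
    have hinv : σ' (X - C g) = X - C g := by
      rw [map_sub, hX, hC, hg, map_add]
      ring
    obtain ⟨c, -, hc⟩ := h (X - C g) hinv
    have := congrArg (fun q => Polynomial.coeff q 1) hc
    simp at this
  · intro hno p hp
    -- key coefficient formula
    set n := p.natDegree with hn
    have hcoeff : ∀ k, (σ' p).coeff k =
        ∑ i ∈ range (n + 1), σ (p.coeff i) * ((X + C β) ^ i).coeff k := by
      intro k
      conv_lhs => rw [p.as_sum_range_C_mul_X_pow, map_sum]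
      rw [finset_sum_coeff]
      refine Finset.sum_congr rfl fun i _ => ?_
      rw [map_mul, map_pow, hC, hX, coeff_C_mul]
    rcases Nat.eq_zero_or_pos n with h0 | hpos
    · have hpc : p = C (p.coeff 0) := p.eq_C_of_natDegree_eq_zero h0
      refine ⟨p.coeff 0, ?_, hpc⟩
      have : σ' (C (p.coeff 0)) = C (p.coeff 0) := by rw [← hpc, hp]
      rw [hC] at this
      exact C_injective this
    · exfalso
      set a := p.coeff n with ha
      set b := p.coeff (n - 1) with hb
      -- coefficient n : σ a = a
      have hsa : σ a = a := by
        have := (hcoeff n).symm.trans (congrArg (fun q => Polynomial.coeff q n) hp)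
        rw [Finset.sum_eq_single n] at this
        · simpa [coeff_X_add_C_pow] using this
        · intro i hi hne
          have hi' : i < n := lt_of_le_of_ne (Nat.lt_succ_iff.mp (mem_range.mp hi)) hne
          simp [coeff_X_add_C_pow, Nat.choose_eq_zero_of_lt hi']
        · simp
      have hane : a ≠ 0 := by
        have : p ≠ 0 := fun h => by simp [h, hn] at hpos
        simpa [ha, hn] using mt leadingCoeff_eq_zero.mp this
      -- coefficient n-1 : σ b + a * (β * n) = b
      have hsb : σ b + a * (β * n) = b := by
        have key := (hcoeff (n-1)).symm.trans
          (congrArg (fun q => Polynomial.coeff q (n-1)) hp)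
        rw [Finset.sum_eq_add_of_mem (n-1) n (by simp) (by simp) (by omega)
          (fun i hi hne => ?_)] at key
        · have h1 : ((X + C β) ^ (n-1)).coeff (n-1) = 1 := by
            simp [coeff_X_add_C_pow]
          have h2 : ((X + C β) ^ n).coeff (n-1) = β * n := by
            rw [coeff_X_add_C_pow]
            have : n - (n - 1) = 1 := by omega
            have hc : n.choose (n - 1) = n := by
              rw [← Nat.choose_symm (by omega : n - 1 ≤ n), this, Nat.choose_one_right]
            rw [this, pow_one, hc]
          rw [h1, h2, hsa, mul_one] at key
          linear_combination key
        · rcases hne with ⟨hne1, hne2⟩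
          rcases Nat.lt_or_ge i (n-1) with hlt | hge
          · simp [coeff_X_add_C_pow, Nat.choose_eq_zero_of_lt hlt]
          · exfalso; have := mem_range.mp hi; omega
      -- get unit
      have hu : IsUnit ((n : A) * a) := by
        refine hfield _ (by rw [map_mul, hsa, map_natCast]) ?_
        intro h
        obtain ⟨v, hv⟩ := hfield a hsa hane
        have hav : a * (↑v⁻¹ : A) = 1 := by rw [← hv, Units.mul_inv]
        have hz : (n : A) = 0 := by
          calc (n : A) = ((n : A) * a) * ↑v⁻¹ := by rw [mul_assoc, hav, mul_one]
            _ = 0 := by rw [h, zero_mul]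
        exact hpos.ne' (Nat.cast_eq_zero.mp hz)
      obtain ⟨w, hw⟩ := hu
      have hwinv : σ (↑w⁻¹ : A) = ↑w⁻¹ := by
        have h1 : σ (↑w : A) = ↑w := by rw [hw, map_mul, hsa, map_natCast]
        have h2 : (↑w : A) * σ (↑w⁻¹ : A) = 1 := by
          rw [← h1, ← map_mul, Units.mul_inv, map_one]
        calc σ (↑w⁻¹ : A) = ↑w⁻¹ * ((↑w : A) * σ (↑w⁻¹ : A)) := by
              rw [← mul_assoc, Units.inv_mul, one_mul]
          _ = ↑w⁻¹ := by rw [h2, mul_one]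
      refine hno ⟨-b * ↑w⁻¹, ?_⟩
      have hσb : σ b = b - a * (β * n) := by linear_combination hsb
      have hwa : ((n : A) * a) * ↑w⁻¹ = 1 := by rw [← hw, Units.mul_inv]
      rw [map_mul, map_neg, hσb, hwinv]
      have : a * (β * ↑n) * ↑w⁻¹ = β := by
        calc a * (β * ↑n) * ↑w⁻¹ = β * (((n:A) * a) * ↑w⁻¹) := by ring
          _ = β := by rw [hwa, mul_one]
      linear_combination this
end

section
/- Let (A, σ) be a difference ring, let α be a unit of A, and let σ' be the ring automorphism of the Laurent polynomial ring A[t, t⁻¹] with σ'(a) = σ(a) for all a ∈ A and σ'(t) = α·t. Then const(A[t,t⁻¹], σ') = const(A, σ) (every σ'-invariant Laurent polynomial is a constant Laurent polynomial with σ-invariant coefficient) if and only if there exist no g ∈ A∖{0} and m ∈ ℤ∖{0} with σ(g) = α^m·g. Moreover, if const(A[t,t⁻¹], σ') = const(A, σ), then α^n ≠ 1 for every integer n > 0. -/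
open LaurentPolynomial

/-- Let `(A, σ)` be a difference ring, `α` a unit of `A`, and `σ'`
the ring automorphism of the Laurent polynomial ring `A[t,t⁻¹]` extending `σ` with
`σ'(t) = α·t`.  Then `const(A[t,t⁻¹], σ') = const(A, σ)` iff there are no
`g ∈ A∖{0}` and `m ∈ ℤ∖{0}` with `σ(g) = α^m·g`; moreover in that case `α^n ≠ 1`
for every integer `n > 0`. -/
theorem stmt_1 {A : Type*} [CommRing A] [CharZero A]
    (σ : A ≃+* A) (α : Aˣ)
    (σ' : LaurentPolynomial A ≃+* LaurentPolynomial A)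
    (hC : ∀ a : A, σ' (LaurentPolynomial.C a) = LaurentPolynomial.C (σ a))
    (hT : σ' (LaurentPolynomial.T 1) = LaurentPolynomial.C (α : A) * LaurentPolynomial.T 1) :
    ((∀ p : LaurentPolynomial A, σ' p = p → ∃ c : A, σ c = c ∧ p = LaurentPolynomial.C c)
      ↔ ¬ ∃ (g : A) (m : ℤ), g ≠ 0 ∧ m ≠ 0 ∧ σ g = ((α ^ m : Aˣ) : A) * g)
    ∧ ((∀ p : LaurentPolynomial A, σ' p = p → ∃ c : A, σ c = c ∧ p = LaurentPolynomial.C c)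
      → ∀ n : ℕ, 0 < n → (α : A) ^ n ≠ 1) := by
  -- σ' on T n for nonnegative n
  have keypos : ∀ n : ℕ, σ' (T (n : ℤ)) = C ((α ^ (n:ℤ) : Aˣ) : A) * T (n : ℤ) := by
    intro n
    induction n with
    | zero => simp
    | succ k ih =>
      have : ((k:ℤ)+1) = (k:ℤ) + 1 := rfl
      push_cast
      rw [T_add, map_mul, ih, hT]
      rw [zpow_add, zpow_one, Units.val_mul, map_mul]
      ring
  have key : ∀ n : ℤ, σ' (T n) = C ((α ^ n : Aˣ) : A) * T n := by
    intro n
    rcases le_or_gt 0 n with h | h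
    · obtain ⟨k, rfl⟩ := Int.eq_ofNat_of_zero_le h
      exact keypos k
    · obtain ⟨k, rfl⟩ : ∃ k : ℕ, n = -(k:ℤ) := ⟨n.natAbs, by omega⟩
      have h1 : σ' (T (-(k:ℤ))) * σ' (T (k:ℤ)) = 1 := by
        rw [← map_mul, ← T_add, neg_add_cancel, T_zero, map_one]
      have h2 : (C ((α ^ (-(k:ℤ)) : Aˣ) : A) * T (-(k:ℤ))) * σ' (T (k:ℤ)) = 1 := by
        rw [keypos k]
        have : (C ((α ^ (-(k:ℤ)) : Aˣ) : A) * T (-(k:ℤ))) * (C ((α ^ (k:ℤ) : Aˣ) : A) * T (k:ℤ))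
            = (C ((α ^ (-(k:ℤ)) : Aˣ) : A) * C ((α ^ (k:ℤ) : Aˣ) : A)) * (T (-(k:ℤ)) * T (k:ℤ)) := by
          ring
        rw [this, ← map_mul, ← Units.val_mul, ← zpow_add, neg_add_cancel, zpow_zero,
          Units.val_one, map_one, one_mul, ← T_add, neg_add_cancel, T_zero]
      calc σ' (T (-(k:ℤ)))
          = σ' (T (-(k:ℤ))) * ((C ((α ^ (-(k:ℤ)) : Aˣ) : A) * T (-(k:ℤ))) * σ' (T (k:ℤ))) := by
            rw [h2, mul_one]
        _ = (C ((α ^ (-(k:ℤ)) : Aˣ) : A) * T (-(k:ℤ))) * (σ' (T (-(k:ℤ))) * σ' (T (k:ℤ))) := by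
            ring
        _ = C ((α ^ (-(k:ℤ)) : Aˣ) : A) * T (-(k:ℤ)) := by rw [h1, mul_one]
  -- σ' on single
  have keysingle : ∀ (n : ℤ) (a : A),
      σ' (AddMonoidAlgebra.single n a : LaurentPolynomial A)
        = AddMonoidAlgebra.single n (σ a * ((α ^ n : Aˣ) : A)) := by
    intro n a
    rw [single_eq_C_mul_T, single_eq_C_mul_T, map_mul, hC, key, map_mul]
    ring
  -- coefficientwise description of σ'
  have coeff : ∀ (p : LaurentPolynomial A) (m : ℤ),
      (σ' p).coeff m = σ (p.coeff m) * ((α ^ m : Aˣ) : A) := by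
    intro p
    induction p using AddMonoidAlgebra.induction_linear with
    | zero => intro m; simp
    | add p q hp hq =>
      intro m
      have h3 : σ' (p + q) = σ' p + σ' q := map_add σ' p q
      have h4 : ((σ' p + σ' q) : LaurentPolynomial A).coeff m = (σ' p).coeff m + (σ' q).coeff m := rfl
      have h5 : ((p + q) : LaurentPolynomial A).coeff m = p.coeff m + q.coeff m := rfl
      rw [h3, h4, h5, hp, hq, map_add, add_mul]
    | single n a =>
      intro m
      rw [keysingle, AddMonoidAlgebra.coeff_single, AddMonoidAlgebra.coeff_single, Finsupp.single_apply, Finsupp.single_apply]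
      by_cases h : n = m
      · subst h; simp only [if_true, eq_self_iff_true]
      · simp only [if_neg h, map_zero, zero_mul]
  constructor
  · constructor
    · -- forward: const condition ⇒ no such g, m
      rintro hconst ⟨g, m, hg, hm, hσg⟩
      set p : LaurentPolynomial A := AddMonoidAlgebra.single (-m) g with hp
      have hfix : σ' p = p := by
        rw [hp, keysingle, hσg]
        congr 1
        have hu : ((α ^ m : Aˣ) : A) * ((α ^ (-m) : Aˣ) : A) = 1 := by
          rw [← Units.val_mul, ← zpow_add, add_neg_cancel, zpow_zero, Units.val_one]
        rw [mul_right_comm, hu, one_mul]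
      obtain ⟨c, _, hpc⟩ := hconst p hfix
      have := congrArg (fun q : LaurentPolynomial A => q.coeff (-m)) hpc
      simp only [hp, AddMonoidAlgebra.coeff_single, Finsupp.single_apply, if_pos rfl] at this
      rw [← single_eq_C (R := A)] at this
      rw [AddMonoidAlgebra.coeff_single, Finsupp.single_apply] at this
      simp only [if_neg (by omega : ¬ (0:ℤ) = -m)] at this
      exact hg this
    · -- backward
      intro hno p hfix
      have hc : ∀ m : ℤ, σ (p.coeff m) * ((α ^ m : Aˣ) : A) = p.coeff m := by
        intro m
        rw [← coeff p m, hfix]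
      have hz : ∀ m : ℤ, m ≠ 0 → p.coeff m = 0 := by
        intro m hm
        by_contra hne
        apply hno
        refine ⟨p.coeff m, -m, hne, by omega, ?_⟩
        have := hc m
        have h2 : σ (p.coeff m) = p.coeff m * ((α ^ (-m) : Aˣ) : A) := by
          have hu : ((α ^ m : Aˣ) : A) * ((α ^ (-m) : Aˣ) : A) = 1 := by
            rw [← Units.val_mul, ← zpow_add, add_neg_cancel, zpow_zero, Units.val_one]
          calc σ (p.coeff m) = σ (p.coeff m) * (((α ^ m : Aˣ) : A) * ((α ^ (-m) : Aˣ) : A)) := by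
                rw [hu, mul_one]
            _ = (σ (p.coeff m) * ((α ^ m : Aˣ) : A)) * ((α ^ (-m) : Aˣ) : A) := by ring
            _ = p.coeff m * ((α ^ (-m) : Aˣ) : A) := by rw [this]
        rw [h2]; ring
      refine ⟨p.coeff 0, ?_, ?_⟩
      · have := hc 0
        simpa using this
      · rw [← single_eq_C]
        ext m
        rcases eq_or_ne m 0 with rfl | h
        · simp
        · rw [hz m h, AddMonoidAlgebra.coeff_single, Finsupp.single_apply, if_neg (by omega : ¬ (0:ℤ) = m)]
  · -- second part
    intro hconst n hn hα
    -- use forward direction logic: g = 1, m = n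
    have hno : ¬ ∃ (g : A) (m : ℤ), g ≠ 0 ∧ m ≠ 0 ∧ σ g = ((α ^ m : Aˣ) : A) * g := by
      rintro ⟨g, m, hg, hm, hσg⟩
      set p : LaurentPolynomial A := AddMonoidAlgebra.single (-m) g with hp
      have hfix : σ' p = p := by
        rw [hp, keysingle, hσg]
        congr 1
        have hu : ((α ^ m : Aˣ) : A) * ((α ^ (-m) : Aˣ) : A) = 1 := by
          rw [← Units.val_mul, ← zpow_add, add_neg_cancel, zpow_zero, Units.val_one]
        rw [mul_right_comm, hu, one_mul]
      obtain ⟨c, _, hpc⟩ := hconst p hfix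
      have := congrArg (fun q : LaurentPolynomial A => q.coeff (-m)) hpc
      simp only [hp, AddMonoidAlgebra.coeff_single, Finsupp.single_apply, if_pos rfl] at this
      rw [← single_eq_C (R := A), AddMonoidAlgebra.coeff_single, Finsupp.single_apply] at this
      simp only [if_neg (by omega : ¬ (0:ℤ) = -m)] at this
      exact hg this
    apply hno
    refine ⟨1, (n:ℤ), one_ne_zero, by omega, ?_⟩
    rw [map_one, mul_one, zpow_natCast, Units.val_pow_eq_pow_val, hα]
end

section
/- Let (A, σ) be a difference ring, let λ be a natural number with λ > 1, and let α be a unit of A with α^λ = 1. Let E = A[y]/⟨y^λ − 1⟩ with quotient map π, write x = π(y), and let σ'' be the ring automorphism of E induced by the automorphism of A[y] acting as σ on A and sending y ↦ α·y (so σ''(x) = α·x and x^λ = 1 in E). Then const(E, σ'') equals the image of const(A, σ) under π (every σ''-invariant element of E comes from a σ-invariant element of A) if and only if there exist no g ∈ A∖{0} and m ∈ {1, …, λ−1} with σ(g) = α^m·g. Moreover, if this holds, then λ is the least positive integer n with α^n = 1. -/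
open Polynomial


/-- Let `(A, σ)` be a difference ring, `λ > 1`, `α` a unit of `A`
with `α^λ = 1`, and let `E = A[y]/⟨y^λ − 1⟩` with induced automorphism `σ''`
(`σ''` acts as `σ` on `A` and sends `x = π(y)` to `α·x`).  Then
`const(E, σ'')` equals the image of `const(A, σ)` iff there are no `g ∈ A∖{0}` and
`m ∈ {1, …, λ−1}` with `σ(g) = α^m·g`; moreover in that case `λ` is the least
positive integer `n` with `α^n = 1`. -/
theorem stmt_2 {A : Type*} [CommRing A] [CharZero A]
    (σ : A ≃+* A) (lam : ℕ) (hlam : 1 < lam)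
    (α : Aˣ) (hα : (α : A) ^ lam = 1)
    (I : Ideal (Polynomial A))
    (hI : I = Ideal.span {(Polynomial.X : Polynomial A) ^ lam - 1})
    (σ'' : (Polynomial A ⧸ I) ≃+* (Polynomial A ⧸ I))
    (hC : ∀ a : A, σ'' (Ideal.Quotient.mk I (Polynomial.C a))
        = Ideal.Quotient.mk I (Polynomial.C (σ a)))
    (hX : σ'' (Ideal.Quotient.mk I Polynomial.X)
        = Ideal.Quotient.mk I (Polynomial.C (α : A)) * Ideal.Quotient.mk I Polynomial.X) :
    ((∀ p : Polynomial A ⧸ I, σ'' p = p →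
        ∃ c : A, σ c = c ∧ p = Ideal.Quotient.mk I (Polynomial.C c))
      ↔ ¬ ∃ (g : A) (m : ℕ), g ≠ 0 ∧ 1 ≤ m ∧ m ≤ lam - 1 ∧ σ g = (α : A) ^ m * g)
    ∧ ((∀ p : Polynomial A ⧸ I, σ'' p = p →
        ∃ c : A, σ c = c ∧ p = Ideal.Quotient.mk I (Polynomial.C c))
      → ∀ n : ℕ, 0 < n → (α : A) ^ n = 1 → lam ≤ n) := by
  set f : Polynomial A := Polynomial.X ^ lam - 1 with hf
  have hmonic : f.Monic := by
    simpa [hf, Polynomial.C_1] using Polynomial.monic_X_pow_sub_C (1 : A)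
      (by omega : lam ≠ 0)
  have hdegf : f.degree = lam := by
    simpa [hf, Polynomial.C_1] using
      Polynomial.degree_X_pow_sub_C (by omega : 0 < lam) (1 : A)
  have hfI : f ∈ I := by rw [hI]; exact Ideal.subset_span rfl
  -- key: low degree polynomials mapping to 0 are 0
  have key0 : ∀ p : Polynomial A, p.degree < (lam : WithBot ℕ) →
      Ideal.Quotient.mk I p = 0 → p = 0 := by
    intro p hdeg hmk
    have hmem : p ∈ I := (Ideal.Quotient.eq_zero_iff_mem).mp hmk
    rw [hI, Ideal.mem_span_singleton] at hmem
    have h0 : p %ₘ f = 0 := (Polynomial.modByMonic_eq_zero_iff_dvd hmonic).mpr hmem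
    rwa [(Polynomial.modByMonic_eq_self_iff hmonic).mpr (hdegf ▸ hdeg)] at h0
  -- description of σ'' on mk p
  have hhom : ∀ p : Polynomial A, σ'' (Ideal.Quotient.mk I p)
      = Polynomial.eval₂ ((Ideal.Quotient.mk I).comp (Polynomial.C.comp (σ : A →+* A)))
          (Ideal.Quotient.mk I (Polynomial.C (α : A) * Polynomial.X)) p := by
    intro p
    have h : (σ''.toRingHom.comp (Ideal.Quotient.mk I))
        = Polynomial.eval₂RingHom
            ((Ideal.Quotient.mk I).comp (Polynomial.C.comp (σ : A →+* A)))
            (Ideal.Quotient.mk I (Polynomial.C (α : A) * Polynomial.X)) := by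
      apply Polynomial.ringHom_ext
      · intro a; simpa using hC a
      · simpa using hX
    have := congrArg (fun g : Polynomial A →+* (Polynomial A ⧸ I) => g p) h
    simpa using this
  have hq : ∀ p : Polynomial A, σ'' (Ideal.Quotient.mk I p)
      = Ideal.Quotient.mk I (∑ i ∈ p.support,
          Polynomial.C (σ (p.coeff i) * (α : A) ^ i) * Polynomial.X ^ i) := by
    intro p
    rw [hhom, Polynomial.eval₂_eq_sum, Polynomial.sum_def, map_sum]
    apply Finset.sum_congr rfl
    intro i _
    simp only [RingHom.comp_apply, RingHom.coe_coe, ← map_pow, ← map_mul]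
    congr 1
    rw [mul_pow, ← Polynomial.C_pow, ← mul_assoc, ← Polynomial.C_mul]
  have hqcoeff : ∀ p : Polynomial A, ∀ j,
      (∑ i ∈ p.support,
        Polynomial.C (σ (p.coeff i) * (α : A) ^ i) * Polynomial.X ^ i).coeff j
      = σ (p.coeff j) * (α : A) ^ j := by
    intro p j
    rw [Polynomial.finset_sum_coeff]
    simp only [Polynomial.coeff_C_mul, Polynomial.coeff_X_pow, mul_ite, mul_one, mul_zero]
    rw [Finset.sum_ite_eq p.support j (fun i => σ (p.coeff i) * (α : A) ^ i)]
    by_cases h : j ∈ p.support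
    · simp [h]
    · simp [h, Polynomial.notMem_support_iff.mp h]
  -- fixed points coefficientwise
  have keycoeff : ∀ p : Polynomial A, p.degree < (lam : WithBot ℕ) →
      σ'' (Ideal.Quotient.mk I p) = Ideal.Quotient.mk I p →
      ∀ j, σ (p.coeff j) * (α : A) ^ j = p.coeff j := by
    intro p hdeg hfix j
    set q : Polynomial A := ∑ i ∈ p.support,
      Polynomial.C (σ (p.coeff i) * (α : A) ^ i) * Polynomial.X ^ i with hqdef
    have h1 : Ideal.Quotient.mk I (q - p) = 0 := by
      rw [map_sub, ← hq p, hfix, sub_self]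
    have hdq : (q - p).degree < (lam : WithBot ℕ) := by
      rw [Polynomial.degree_lt_iff_coeff_zero]
      intro m hm
      have hpm : p.coeff m = 0 :=
        Polynomial.coeff_eq_zero_of_degree_lt (lt_of_lt_of_le hdeg (by exact_mod_cast hm))
      rw [Polynomial.coeff_sub, hqdef, hqcoeff p m, hpm, map_zero, zero_mul, sub_zero]
    have h2 : q - p = 0 := key0 _ hdq h1
    have h3 : q = p := by rw [sub_eq_zero] at h2; exact h2
    have h4 := hqcoeff p j
    rw [← hqdef, h3] at h4
    exact h4.symm
  have main : (∀ p : Polynomial A ⧸ I, σ'' p = p →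
        ∃ c : A, σ c = c ∧ p = Ideal.Quotient.mk I (Polynomial.C c))
      ↔ ¬ ∃ (g : A) (m : ℕ), g ≠ 0 ∧ 1 ≤ m ∧ m ≤ lam - 1 ∧ σ g = (α : A) ^ m * g := by
    constructor
    · rintro hconst ⟨g, m, hg, hm1, hm2, hgm⟩
      set k := lam - m with hk
      have hk1 : 1 ≤ k := by omega
      have hkl : k < lam := by omega
      have hmk : m + k = lam := by omega
      have hcc : (α : A) ^ m * (α : A) ^ k = 1 := by
        rw [← pow_add, hmk, hα]
      have hpoly : Polynomial.C (σ g) * (Polynomial.C (α : A) * Polynomial.X) ^ k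
          = Polynomial.C g * Polynomial.X ^ k := by
        rw [hgm, mul_pow, ← Polynomial.C_pow]
        rw [show Polynomial.C ((α : A) ^ m * g) * (Polynomial.C ((α : A) ^ k) * Polynomial.X ^ k)
          = Polynomial.C ((α : A) ^ m * (α : A) ^ k * g) * Polynomial.X ^ k by
            rw [Polynomial.C_mul, Polynomial.C_mul, Polynomial.C_mul]; ring]
        rw [hcc, one_mul]
      have hfix : σ'' (Ideal.Quotient.mk I (Polynomial.C g * Polynomial.X ^ k))
          = Ideal.Quotient.mk I (Polynomial.C g * Polynomial.X ^ k) := by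
        rw [map_mul, map_pow, map_mul, map_pow, hC, hX]
        simp only [← map_pow, ← map_mul]
        rw [hpoly]
      obtain ⟨c, _, hc2⟩ := hconst _ hfix
      have hz : Ideal.Quotient.mk I
          (Polynomial.C g * Polynomial.X ^ k - Polynomial.C c) = 0 := by
        rw [map_sub, ← hc2, sub_self]
      have hdeg : (Polynomial.C g * Polynomial.X ^ k - Polynomial.C c).degree
          < (lam : WithBot ℕ) := by
        rw [Polynomial.degree_lt_iff_coeff_zero]
        intro m' hm'
        have hm'l : lam ≤ m' := by exact_mod_cast hm'
        have hkm' : ¬ (m' = k) := by omega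
        have hm'0 : ¬ (m' = 0) := by omega
        simp [Polynomial.coeff_sub, Polynomial.coeff_C_mul, Polynomial.coeff_X_pow,
          Polynomial.coeff_C, hkm', hm'0]
      have h0 : Polynomial.C g * Polynomial.X ^ k - Polynomial.C c = 0 := key0 _ hdeg hz
      have h5 := congrArg (fun p : Polynomial A => p.coeff k) h0
      simp only [Polynomial.coeff_sub, Polynomial.coeff_C_mul, Polynomial.coeff_X_pow,
        Polynomial.coeff_C, Polynomial.coeff_zero] at h5
      simp only [if_true, if_neg (by omega : ¬ k = 0), mul_one, sub_zero] at h5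
      exact hg h5
    · intro hno p hfixp
      obtain ⟨r, rfl⟩ := Ideal.Quotient.mk_surjective p
      have hdeg : (r %ₘ f).degree < (lam : WithBot ℕ) :=
        hdegf ▸ Polynomial.degree_modByMonic_lt r hmonic
      have hmkeq : Ideal.Quotient.mk I (r %ₘ f) = Ideal.Quotient.mk I r := by
        calc Ideal.Quotient.mk I (r %ₘ f)
            = Ideal.Quotient.mk I (r %ₘ f) + Ideal.Quotient.mk I (f * (r /ₘ f)) := by
              rw [Ideal.Quotient.eq_zero_iff_mem.mpr (Ideal.mul_mem_right _ _ hfI), add_zero]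
          _ = Ideal.Quotient.mk I r := by
              rw [← map_add, Polynomial.modByMonic_add_div r f]
      have hfix' : σ'' (Ideal.Quotient.mk I (r %ₘ f)) = Ideal.Quotient.mk I (r %ₘ f) := by
        rw [hmkeq]; exact hfixp
      have hco := keycoeff _ hdeg hfix'
      have hzero : ∀ j, 1 ≤ j → (r %ₘ f).coeff j = 0 := by
        intro j hj
        by_cases hjl : j < lam
        · by_contra hne
          apply hno
          refine ⟨(r %ₘ f).coeff j, lam - j, hne, by omega, by omega, ?_⟩
          have hαj : (α : A) ^ j * (α : A) ^ (lam - j) = 1 := by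
            rw [← pow_add, show j + (lam - j) = lam by omega, hα]
          calc σ ((r %ₘ f).coeff j)
              = σ ((r %ₘ f).coeff j) * ((α : A) ^ j * (α : A) ^ (lam - j)) := by
                rw [hαj, mul_one]
            _ = (σ ((r %ₘ f).coeff j) * (α : A) ^ j) * (α : A) ^ (lam - j) := by ring
            _ = (α : A) ^ (lam - j) * (r %ₘ f).coeff j := by rw [hco j]; ring
        · exact Polynomial.coeff_eq_zero_of_degree_lt
            (lt_of_lt_of_le hdeg (by exact_mod_cast le_of_not_gt hjl))
      have hC0 : r %ₘ f = Polynomial.C ((r %ₘ f).coeff 0) := by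
        ext n
        cases n with
        | zero => simp
        | succ n => simp [Polynomial.coeff_C, hzero (n + 1) (by omega)]
      refine ⟨(r %ₘ f).coeff 0, ?_, ?_⟩
      · have := hco 0
        simpa using this
      · rw [← hmkeq]
        exact congrArg (Ideal.Quotient.mk I) hC0
  refine ⟨main, fun hconst n hn hαn => ?_⟩
  by_contra hlt
  push_neg at hlt
  exact (main.mp hconst) ⟨1, n, one_ne_zero, hn, by omega, by simp [hαn]⟩
end

section
/- Let (A, σ) be a difference ring and let G be a subgroup of the unit group Aˣ such that every nonzero element c ∈ A satisfying σ(c) = u·c for some u ∈ G is a unit of A. Let f₁, …, fₙ ∈ G. Then the set M((f₁,…,fₙ), A) = {(m₁,…,mₙ) ∈ ℤⁿ : there exists g ∈ A∖{0} with σ(g) = f₁^{m₁}···fₙ^{mₙ}·g} is an additive subgroup of ℤⁿ (in particular a ℤ-submodule of ℤⁿ, hence free of rank at most n). -/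
/-- Let `(A, σ)` be a difference ring and `G ≤ Aˣ` such that every
nonzero semi-constant over `G` is a unit.  For `f₁, …, fₙ ∈ G`, the set
`M((f₁,…,fₙ), A) = {m ∈ ℤⁿ : ∃ g ≠ 0, σ(g) = f₁^{m₁}⋯fₙ^{mₙ}·g}` is an additive
subgroup of `ℤⁿ`. -/
theorem stmt_3 {A : Type*} [CommRing A] [CharZero A]
    (σ : A ≃+* A) (G : Subgroup Aˣ)
    (hG : ∀ c : A, c ≠ 0 → (∃ u ∈ G, σ c = (u : A) * c) → IsUnit c)
    (n : ℕ) (f : Fin n → Aˣ) (hf : ∀ i, f i ∈ G) :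
    ∃ M : AddSubgroup (Fin n → ℤ),
      (M : Set (Fin n → ℤ)) =
        {m : Fin n → ℤ | ∃ g : A, g ≠ 0 ∧ σ g = ((∏ i, f i ^ m i : Aˣ) : A) * g} := by
  have hprod : ∀ m : Fin n → ℤ, (∏ i, f i ^ m i) ∈ G := fun m =>
    Subgroup.prod_mem G (fun i _ => Subgroup.zpow_mem G (hf i) (m i))
  have hunit : ∀ (m : Fin n → ℤ) (g : A), g ≠ 0 →
      σ g = ((∏ i, f i ^ m i : Aˣ) : A) * g → IsUnit g :=
    fun m g hg hσ => hG g hg ⟨_, hprod m, hσ⟩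
  refine ⟨{ carrier := {m : Fin n → ℤ | ∃ g : A, g ≠ 0 ∧
              σ g = ((∏ i, f i ^ m i : Aˣ) : A) * g},
            zero_mem' := ⟨1, one_ne_zero, by simp⟩,
            add_mem' := ?_, neg_mem' := ?_ }, rfl⟩
  · rintro a b ⟨g, hg, hσg⟩ ⟨h, hh, hσh⟩
    refine ⟨g * h, ((hunit a g hg hσg).mul (hunit b h hh hσh)).ne_zero, ?_⟩
    have key : (∏ i, f i ^ ((a + b) i)) = (∏ i, f i ^ a i) * (∏ i, f i ^ b i) := by
      rw [← Finset.prod_mul_distrib]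
      exact Finset.prod_congr rfl fun i _ => zpow_add (f i) (a i) (b i)
    rw [map_mul, hσg, hσh, key]
    push_cast
    ring
  · rintro a ⟨g, hg, hσg⟩
    obtain ⟨u, rfl⟩ := hunit a g hg hσg
    refine ⟨((u⁻¹ : Aˣ) : A), Units.ne_zero _, ?_⟩
    have hv : (Units.map (σ : A →* A)) u = (∏ i, f i ^ a i) * u := by
      ext
      simpa using hσg
    have hv' : (Units.map (σ : A →* A)) u⁻¹ = (∏ i, f i ^ a i)⁻¹ * u⁻¹ := by
      rw [map_inv, hv, mul_inv]
    have key : (∏ i, f i ^ ((-a) i)) = (∏ i, f i ^ a i)⁻¹ := by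
      rw [← Finset.prod_inv_distrib]
      exact Finset.prod_congr rfl fun i _ => zpow_neg (f i) (a i)
    calc σ ((u⁻¹ : Aˣ) : A) = ((Units.map (σ : A →* A)) u⁻¹ : A) := rfl
      _ = ((∏ i, f i ^ ((-a) i) : Aˣ) : A) * ((u⁻¹ : Aˣ) : A) := by
          rw [hv', key]; push_cast; ring
end

section
/- Let (A, σ) be a difference ring whose constants form a field K = const(A,σ), and let G be a subgroup of the unit group Aˣ such that every nonzero element c ∈ A satisfying σ(c) = u·c for some u ∈ G is a unit of A. Let W be a K-submodule of A, let f₁, …, fₙ ∈ A, and let u ∈ G. Then V(u, (f₁,…,fₙ), W) = {(c₁,…,cₙ,g) ∈ Kⁿ × W : σ(g) − u·g = c₁f₁ + ⋯ + cₙfₙ} is a K-submodule of Kⁿ × W of dimension at most n + 1 over K (equivalently, any n + 2 of its elements are K-linearly dependent). -/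
/-- The solution set `V(u, (f₁,…,fₙ), W)` of the parameterized first-order linear
difference equation `σ(g) − u·g = c₁f₁ + ⋯ + cₙfₙ` with constants `cᵢ` and `g ∈ W`. -/
def paramSolSet {A : Type*} [CommRing A] (σ : A ≃+* A) (W : Set A) {n : ℕ}
    (f : Fin n → A) (u : A) : Set ((Fin n → A) × A) :=
  {p | (∀ i, σ (p.1 i) = p.1 i) ∧ p.2 ∈ W ∧ σ p.2 - u * p.2 = ∑ i, p.1 i * f i}

/-- The subring of constants of a difference ring. -/
def constSubring {A : Type*} [CommRing A] (σ : A ≃+* A) : Subring A where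
  carrier := {c | σ c = c}
  mul_mem' := fun {a b} ha hb => by
    simp only [Set.mem_setOf_eq, map_mul] at *; rw [ha, hb]
  one_mem' := map_one σ
  add_mem' := fun {a b} ha hb => by
    simp only [Set.mem_setOf_eq, map_add] at *; rw [ha, hb]
  zero_mem' := map_zero σ
  neg_mem' := fun {a} ha => by
    simp only [Set.mem_setOf_eq, map_neg] at *; rw [ha]

/-- If every nonzero constant is a unit, the constants form a field. -/
@[reducible]
noncomputable def constField {A : Type*} [CommRing A] [CharZero A] (σ : A ≃+* A)
    (hfield : ∀ c : A, σ c = c → c ≠ 0 → IsUnit c) : Field (constSubring σ) := by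
  apply IsField.toField
  refine ⟨⟨0, 1, fun h => zero_ne_one (congrArg Subtype.val h)⟩, mul_comm, ?_⟩
  rintro ⟨a, ha⟩ h0
  have ha0 : a ≠ 0 := fun h => h0 (Subtype.ext h)
  obtain ⟨w, hw⟩ := hfield a ha ha0
  set b : A := ((w⁻¹ : Aˣ) : A) with hb
  have hab : a * b = 1 := by rw [← hw]; exact w.mul_inv
  have hba : b * a = 1 := by rw [mul_comm]; exact hab
  have h1 : σ b * a = 1 := by
    rw [← ha, ← map_mul, hba, map_one]
  have hbK : σ b = b := by
    calc σ b = σ b * (a * b) := by rw [hab, mul_one]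
    _ = (σ b * a) * b := by ring
    _ = b := by rw [h1, one_mul]
  exact ⟨⟨b, hbK⟩, Subtype.ext hab⟩

/-- In a field, the space of linear relations among `n+2` vectors of `Kⁿ` has
dimension at least `2`, so it contains two "independent" relations. -/
theorem exists_two_relations {K : Type*} [Field K] {n : ℕ} (C : Fin (n + 2) → Fin n → K) :
    ∃ d e : Fin (n + 2) → K, (∃ j, d j ≠ 0) ∧ (∀ i, ∑ j, d j * C j i = 0) ∧
      (∀ i, ∑ j, e j * C j i = 0) ∧ ∀ c : K, ∃ j, e j - c * d j ≠ 0 := by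
  let φ : (Fin (n + 2) → K) →ₗ[K] (Fin n → K) :=
    { toFun := fun w i => ∑ j, w j * C j i
      map_add' := by
        intro x y; funext i
        simp [add_mul, Finset.sum_add_distrib]
      map_smul' := by
        intro c x; funext i
        simp [Finset.mul_sum, mul_assoc] }
  have hφ : ∀ w : Fin (n + 2) → K, w ∈ LinearMap.ker φ → ∀ i, ∑ j, w j * C j i = 0 := by
    intro w hw i
    exact congrFun (LinearMap.mem_ker.mp hw) i
  have hker : 2 ≤ Module.finrank K (LinearMap.ker φ) := by
    have hrn := LinearMap.finrank_range_add_finrank_ker φ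
    have hr : Module.finrank K (LinearMap.range φ) ≤ n := by
      have := Submodule.finrank_le (LinearMap.range φ)
      simpa [Module.finrank_pi] using this
    have hd : Module.finrank K (Fin (n + 2) → K) = n + 2 := by
      simp [Module.finrank_pi]
    omega
  obtain ⟨d, hdker, hd0⟩ : ∃ d, d ∈ LinearMap.ker φ ∧ d ≠ 0 := by
    by_contra h
    push_neg at h
    have hbot : LinearMap.ker φ = ⊥ := by
      rw [Submodule.eq_bot_iff]
      exact h
    rw [hbot, finrank_bot] at hker; omega
  obtain ⟨e, heker, hespan⟩ : ∃ e, e ∈ LinearMap.ker φ ∧ e ∉ Submodule.span K {d} := by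
    by_contra h
    push_neg at h
    have hle : LinearMap.ker φ ≤ Submodule.span K {d} := fun x hx => h x hx
    have := Submodule.finrank_mono hle
    rw [finrank_span_singleton hd0] at this
    omega
  refine ⟨d, e, Function.ne_iff.mp hd0, hφ d hdker, hφ e heker, ?_⟩
  intro c
  by_contra h
  push_neg at h
  apply hespan
  have : e = c • d := funext fun j => by
    have := sub_eq_zero.mp (h j)
    simpa using this
  rw [this]
  exact Submodule.smul_mem _ _ (Submodule.mem_span_singleton_self d)

/-- Let `(A, σ)` be a difference ring whose constants form a field
`K`, and `G ≤ Aˣ` such that every nonzero semi-constant over `G` is a unit.  For a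
`K`-submodule `W` of `A`, `f₁, …, fₙ ∈ A` and `u ∈ G`, the set
`V(u, (f₁,…,fₙ), W) = {(c₁,…,cₙ,g) ∈ Kⁿ × W : σ(g) − u·g = Σ cᵢfᵢ}` is a
`K`-submodule of `Kⁿ × W` of dimension at most `n + 1` over `K` (any `n + 2` of its
elements are `K`-linearly dependent). -/
theorem stmt_4 {A : Type*} [CommRing A] [CharZero A]
    (σ : A ≃+* A)
    (hfield : ∀ c : A, σ c = c → c ≠ 0 → IsUnit c)
    (G : Subgroup Aˣ)
    (hG : ∀ c : A, c ≠ 0 → (∃ u ∈ G, σ c = (u : A) * c) → IsUnit c)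
    (W : Set A) (hW0 : (0 : A) ∈ W)
    (hWadd : ∀ x ∈ W, ∀ y ∈ W, x + y ∈ W)
    (hWsmul : ∀ c : A, σ c = c → ∀ x ∈ W, c * x ∈ W)
    (n : ℕ) (f : Fin n → A) (u : Aˣ) (hu : u ∈ G) :
    ((0 : (Fin n → A) × A) ∈ paramSolSet σ W f (u : A))
    ∧ (∀ p ∈ paramSolSet σ W f (u : A), ∀ q ∈ paramSolSet σ W f (u : A),
        p + q ∈ paramSolSet σ W f (u : A))
    ∧ (∀ c : A, σ c = c → ∀ p ∈ paramSolSet σ W f (u : A),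
        ((fun i => c * p.1 i, c * p.2) : (Fin n → A) × A) ∈ paramSolSet σ W f (u : A))
    ∧ (∀ v : Fin (n + 2) → ((Fin n → A) × A),
        (∀ j, v j ∈ paramSolSet σ W f (u : A)) →
        ∃ d : Fin (n + 2) → A, (∀ j, σ (d j) = d j) ∧ (∃ j, d j ≠ 0) ∧
          (∀ i, ∑ j, d j * (v j).1 i = 0) ∧ ∑ j, d j * (v j).2 = 0) := by
  refine ⟨?_, ?_, ?_, ?_⟩
  · exact ⟨fun i => map_zero σ, hW0, by simp⟩
  · rintro p ⟨hp1, hp2, hp3⟩ q ⟨hq1, hq2, hq3⟩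
    refine ⟨fun i => by simp [map_add, hp1 i, hq1 i], hWadd _ hp2 _ hq2, ?_⟩
    show σ (p.2 + q.2) - (u : A) * (p.2 + q.2) = ∑ i, (p.1 i + q.1 i) * f i
    have hsum : ∑ i, (p.1 i + q.1 i) * f i
        = (∑ i, p.1 i * f i) + ∑ i, q.1 i * f i := by
      rw [← Finset.sum_add_distrib]
      exact Finset.sum_congr rfl fun i _ => by ring
    rw [map_add, hsum, ← hp3, ← hq3]; ring
  · rintro c hc p ⟨hp1, hp2, hp3⟩
    refine ⟨fun i => by simp [map_mul, hc, hp1 i], hWsmul c hc _ hp2, ?_⟩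
    show σ (c * p.2) - (u : A) * (c * p.2) = ∑ i, (c * p.1 i) * f i
    have hsum : ∑ i, (c * p.1 i) * f i = c * ∑ i, p.1 i * f i := by
      rw [Finset.mul_sum]
      exact Finset.sum_congr rfl fun i _ => by ring
    rw [map_mul, hc, hsum, ← hp3]; ring
  · intro v hv
    letI F : Field (constSubring σ) := constField σ hfield
    let C : Fin (n + 2) → Fin n → constSubring σ := fun j i => ⟨(v j).1 i, (hv j).1 i⟩
    -- key facts for any coefficient vector annihilating the `C` matrix
    have key : ∀ w : Fin (n + 2) → constSubring σ,
        (∀ i, ∑ j, w j * C j i = 0) →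
        (∀ i, ∑ j, (w j : A) * (v j).1 i = 0) ∧
        σ (∑ j, (w j : A) * (v j).2) = (u : A) * ∑ j, (w j : A) * (v j).2 := by
      intro w hw
      have hwi : ∀ i, ∑ j, (w j : A) * (v j).1 i = 0 := by
        intro i
        have := congrArg (Subtype.val : constSubring σ → A) (hw i)
        simpa using this
      refine ⟨hwi, ?_⟩
      have hsum : σ (∑ j, (w j : A) * (v j).2) - (u : A) * ∑ j, (w j : A) * (v j).2
          = ∑ j, (w j : A) * (σ (v j).2 - (u : A) * (v j).2) := by
        rw [map_sum, Finset.mul_sum, ← Finset.sum_sub_distrib]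
        refine Finset.sum_congr rfl fun j _ => ?_
        rw [map_mul, (w j).2]; ring
      have hzero : ∑ j, (w j : A) * (σ (v j).2 - (u : A) * (v j).2) = 0 := by
        calc ∑ j, (w j : A) * (σ (v j).2 - (u : A) * (v j).2)
            = ∑ j, ∑ i, (w j : A) * ((v j).1 i * f i) := by
              refine Finset.sum_congr rfl fun j _ => ?_
              rw [(hv j).2.2, Finset.mul_sum]
          _ = ∑ i, (∑ j, (w j : A) * (v j).1 i) * f i := by
              rw [Finset.sum_comm]
              exact Finset.sum_congr rfl fun i _ => by
                rw [Finset.sum_mul]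
                exact Finset.sum_congr rfl fun j _ => by ring
          _ = 0 := by simp [hwi]
      have h0 := hsum.trans hzero
      linear_combination h0
    obtain ⟨d, e, hd0, hdC, heC, hind⟩ := @exists_two_relations (constSubring σ) F n C
    obtain ⟨hdi, hdσ⟩ := key d hdC
    have hdW : (∑ j, (d j : A) * (v j).2) ∈ W := by
      apply Finset.sum_induction _ (· ∈ W) (fun a b ha hb => hWadd a ha b hb) hW0
      intro j _
      exact hWsmul _ (d j).2 _ (hv j).2.1
    set gd : A := ∑ j, (d j : A) * (v j).2 with hgddef
    by_cases hgd0 : gd = 0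
    · refine ⟨fun j => (d j : A), fun j => (d j).2, ?_, hdi, hgd0⟩
      obtain ⟨j, hj⟩ := hd0
      exact ⟨j, fun h => hj (Subtype.ext h)⟩
    · obtain ⟨wgd, hwgd⟩ := hG gd hgd0 ⟨u, hu, hdσ⟩
      obtain ⟨hei, heσ⟩ := key e heC
      set ge : A := ∑ j, (e j : A) * (v j).2 with hgedef
      set c : A := ge * ((wgd⁻¹ : Aˣ) : A) with hcdef
      have hwinv : ((wgd⁻¹ : Aˣ) : A) * gd = 1 := by rw [← hwgd]; exact wgd.inv_mul
      have hσwinv : σ ((wgd⁻¹ : Aˣ) : A) = ((u⁻¹ : Aˣ) : A) * ((wgd⁻¹ : Aˣ) : A) := by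
        have h1 : σ ((wgd⁻¹ : Aˣ) : A) * ((u : A) * gd) = 1 := by
          rw [← hdσ, ← map_mul, hwinv, map_one]
        have h2 : (((u⁻¹ : Aˣ) : A) * ((wgd⁻¹ : Aˣ) : A)) * ((u : A) * gd) = 1 := by
          rw [show (((u⁻¹ : Aˣ) : A) * ((wgd⁻¹ : Aˣ) : A)) * ((u : A) * gd)
              = (((u : A) * ((u⁻¹ : Aˣ) : A))) * (((wgd⁻¹ : Aˣ) : A) * gd) by ring,
            hwinv, u.mul_inv, one_mul]
        calc σ ((wgd⁻¹ : Aˣ) : A)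
            = σ ((wgd⁻¹ : Aˣ) : A)
              * (((u : A) * gd) * (((u⁻¹ : Aˣ) : A) * ((wgd⁻¹ : Aˣ) : A))) := by
              rw [show ((u : A) * gd) * (((u⁻¹ : Aˣ) : A) * ((wgd⁻¹ : Aˣ) : A))
                  = (((u⁻¹ : Aˣ) : A) * ((wgd⁻¹ : Aˣ) : A)) * ((u : A) * gd) by ring,
                h2, mul_one]
          _ = (σ ((wgd⁻¹ : Aˣ) : A) * ((u : A) * gd))
              * (((u⁻¹ : Aˣ) : A) * ((wgd⁻¹ : Aˣ) : A)) := by ring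
          _ = ((u⁻¹ : Aˣ) : A) * ((wgd⁻¹ : Aˣ) : A) := by rw [h1, one_mul]
      have hcK : σ c = c := by
        rw [hcdef, map_mul, heσ, hσwinv]
        rw [show (u : A) * ge * (((u⁻¹ : Aˣ) : A) * ((wgd⁻¹ : Aˣ) : A))
            = ((u : A) * ((u⁻¹ : Aˣ) : A)) * (ge * ((wgd⁻¹ : Aˣ) : A)) by ring,
          u.mul_inv, one_mul]
      set c' : constSubring σ := ⟨c, hcK⟩ with hc'def
      set w : Fin (n + 2) → constSubring σ := fun j => e j - c' * d j with hwdef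
      have hwC : ∀ i, ∑ j, w j * C j i = 0 := by
        intro i
        have : ∑ j, w j * C j i = (∑ j, e j * C j i) - c' * ∑ j, d j * C j i := by
          rw [Finset.mul_sum, ← Finset.sum_sub_distrib]
          exact Finset.sum_congr rfl fun j _ => by rw [hwdef]; ring
        rw [this, hdC i, heC i, mul_zero, sub_zero]
      obtain ⟨hwi, _⟩ := key w hwC
      refine ⟨fun j => (w j : A), fun j => (w j).2, ?_, hwi, ?_⟩
      · obtain ⟨j, hj⟩ := hind c'
        exact ⟨j, fun h => hj (Subtype.ext h)⟩
      · have hsplit : ∑ j, (w j : A) * (v j).2 = ge - c * gd := by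
          rw [hgedef, hgddef, Finset.mul_sum, ← Finset.sum_sub_distrib]
          refine Finset.sum_congr rfl fun j _ => ?_
          have : ((w j : A)) = (e j : A) - c * (d j : A) := rfl
          rw [this]; ring
        rw [hsplit, hcdef, show ge * ((wgd⁻¹ : Aˣ) : A) * gd
            = ge * (((wgd⁻¹ : Aˣ) : A) * gd) by ring, hwinv, mul_one, sub_self]
end

section
/- Let (A, σ) be a difference ring and let G be a subgroup of the unit group Aˣ such that every nonzero element c ∈ A satisfying σ(c) = u·c for some u ∈ G is a unit of A. Let β ∈ A and let σ' be the ring automorphism of A[t] with σ'(a) = σ(a) for a ∈ A and σ'(t) = t + β. If there exist u ∈ G and g ∈ A[t] with deg(g) ≥ 1 such that deg(σ'(g) − u·g) < deg(g) − 1, then there exists γ ∈ A with σ(γ) − γ = β. -/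
/-- Let `(A, σ)` be a difference ring and `G ≤ Aˣ` with every
nonzero semi-constant over `G` a unit.  Let `σ'` on `A[t]` extend `σ` with
`σ'(t) = t + β`.  If there are `u ∈ G` and `g ∈ A[t]` with `deg(g) ≥ 1` and
`deg(σ'(g) − u·g) < deg(g) − 1` (stated equivalently as
`deg(σ'(g) − u·g) + 1 < deg(g)`, since `⊥` absorbs addition), then there is
`γ ∈ A` with `σ(γ) − γ = β`. -/
theorem stmt_7 {A : Type*} [CommRing A] [CharZero A]
    (σ : A ≃+* A) (G : Subgroup Aˣ)
    (hG : ∀ c : A, c ≠ 0 → (∃ u ∈ G, σ c = (u : A) * c) → IsUnit c)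
    (β : A)
    (σ' : Polynomial A ≃+* Polynomial A)
    (hC : ∀ a : A, σ' (Polynomial.C a) = Polynomial.C (σ a))
    (hX : σ' Polynomial.X = Polynomial.X + Polynomial.C β)
    (u : Aˣ) (hu : u ∈ G) (g : Polynomial A) (hdeg : 1 ≤ g.degree)
    (hlt : (σ' g - Polynomial.C (u : A) * g).degree + 1 < g.degree) :
    ∃ γ : A, σ γ - γ = β := by
  classical
  open Polynomial in
  set n := g.natDegree with hn
  have hg0 : g ≠ 0 := by
    intro h0
    rw [h0, Polynomial.degree_zero] at hdeg
    exact absurd hdeg (by simp)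
  have hdg : g.degree = (n : WithBot ℕ) := Polynomial.degree_eq_natDegree hg0
  have hn1 : 0 < n := Polynomial.natDegree_pos_iff_degree_pos.mpr
    (lt_of_lt_of_le zero_lt_one hdeg)
  set h : Polynomial A := σ' g - Polynomial.C (u : A) * g with hh
  -- degree bounds
  have hhn : h.degree < (n : WithBot ℕ) := by
    rw [← hdg]
    refine lt_of_le_of_lt ?_ hlt
    exact le_add_of_nonneg_right zero_le_one
  have hhn1 : h.degree < ((n - 1 : ℕ) : WithBot ℕ) := by
    have : h.degree + 1 < ((n - 1 : ℕ) : WithBot ℕ) + 1 := by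
      rw [hdg] at hlt
      have : ((n - 1 : ℕ) : WithBot ℕ) + 1 = (n : WithBot ℕ) := by
        have h' : n - 1 + 1 = n := Nat.sub_add_cancel hn1
        exact_mod_cast congrArg (Nat.cast : ℕ → WithBot ℕ) h'
      rw [this]
      exact hlt
    exact lt_of_add_lt_add_right this
  have hcn : h.coeff n = 0 := Polynomial.coeff_eq_zero_of_degree_lt hhn
  have hcn1 : h.coeff (n - 1) = 0 := Polynomial.coeff_eq_zero_of_degree_lt hhn1
  -- explicit form of σ' g
  have hσg : σ' g = ∑ i ∈ Finset.range (n + 1),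
      Polynomial.C (σ (g.coeff i)) * (Polynomial.X + Polynomial.C β) ^ i := by
    conv_lhs => rw [g.as_sum_range' (n + 1) (lt_add_one n)]
    rw [map_sum]
    refine Finset.sum_congr rfl fun i _ => ?_
    rw [← Polynomial.C_mul_X_pow_eq_monomial, map_mul, map_pow, hC, hX]
  have hcoeffσ : ∀ k : ℕ, (σ' g).coeff k =
      ∑ i ∈ Finset.range (n + 1),
        σ (g.coeff i) * (β ^ (i - k) * (i.choose k : A)) := by
    intro k
    rw [hσg, Polynomial.finset_sum_coeff]
    refine Finset.sum_congr rfl fun i _ => ?_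
    rw [Polynomial.coeff_C_mul, Polynomial.coeff_X_add_C_pow]
  set a := g.coeff n with ha
  set b := g.coeff (n - 1) with hb
  have ha0 : a ≠ 0 := by
    rw [ha]
    exact Polynomial.coeff_ne_zero_of_eq_degree hdg
  -- coefficient n equation: σ a = u * a
  have E1 : σ a = (u : A) * a := by
    have h1 : (σ' g).coeff n = σ a := by
      rw [hcoeffσ n, Finset.sum_eq_single n]
      · simp [ha]
      · intro i hi hne
        have hi' : i < n + 1 := Finset.mem_range.mp hi
        have : i.choose n = 0 := Nat.choose_eq_zero_of_lt (by omega)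
        simp [this]
      · simp
    have h2 : h.coeff n = σ a - (u : A) * a := by
      rw [hh, Polynomial.coeff_sub, Polynomial.coeff_C_mul, h1]
    rw [h2] at hcn
    linear_combination hcn
  -- coefficient n-1 equation
  have E2 : σ b + σ a * (β * n) - (u : A) * b = 0 := by
    have h1 : (σ' g).coeff (n - 1) = σ b + σ a * (β * n) := by
      rw [hcoeffσ (n - 1)]
      rw [Finset.sum_eq_add_of_mem (n - 1) n (by simp) (by simp)
        (by omega) ?_]
      · have e1 : (n - 1) - (n - 1) = 0 := Nat.sub_self _
        have e2 : (n - 1).choose (n - 1) = 1 := Nat.choose_self _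
        have e3 : n - (n - 1) = 1 := by omega
        have e4 : n.choose (n - 1) = n := by
          rw [← Nat.choose_symm (Nat.sub_le n 1), Nat.sub_sub_self hn1,
            Nat.choose_one_right]
        rw [e1, e2, e3, e4]
        ring
      · intro i hi hne
        have hi' : i < n + 1 := Finset.mem_range.mp hi
        have : i.choose (n - 1) = 0 := by
          refine Nat.choose_eq_zero_of_lt ?_
          omega
        simp [this]
    have h2 : h.coeff (n - 1) = σ b + σ a * (β * n) - (u : A) * b := by
      rw [hh, Polynomial.coeff_sub, Polynomial.coeff_C_mul, h1]
    rw [h2] at hcn1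
    exact hcn1
  -- a is a unit
  have hua : IsUnit a := hG a ha0 ⟨u, hu, E1⟩
  -- (n : A) is a unit
  have hnA0 : (n : A) ≠ 0 := Nat.cast_ne_zero.mpr (by omega)
  have hun : IsUnit ((n : A)) := hG _ hnA0 ⟨1, G.one_mem, by simp⟩
  obtain ⟨e, he⟩ := (hun.mul hua)
  -- e : Aˣ with ↑e = (n:A) * a
  have hσe : σ (e : A) = (u : A) * (e : A) := by
    rw [he, map_mul, E1, map_natCast]
    ring
  refine ⟨-(b * (↑e⁻¹ : A)), ?_⟩
  have hinv : σ ((↑e⁻¹ : A)) * ((u : A) * (e : A)) = 1 := by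
    rw [← hσe, ← map_mul]
    have : (↑e⁻¹ : A) * (e : A) = 1 := by
      rw [← Units.val_mul, inv_mul_cancel, Units.val_one]
    rw [this, map_one]
  set v : A := (u : A) * (e : A) with hv
  have hvu : IsUnit v := (u.isUnit).mul e.isUnit
  obtain ⟨w, hw⟩ := hvu
  have key : (σ (-(b * (↑e⁻¹ : A))) - -(b * (↑e⁻¹ : A))) * v = β * v := by
    rw [map_neg, map_mul]
    have h1 : σ b * σ ((↑e⁻¹ : A)) * v = σ b * 1 := by
      rw [mul_assoc, hinv]
    have h2 : b * (↑e⁻¹ : A) * v = b * (u : A) := by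
      rw [hv]
      have : (↑e⁻¹ : A) * (e : A) = 1 := by
        rw [← Units.val_mul, inv_mul_cancel, Units.val_one]
      calc b * (↑e⁻¹ : A) * ((u : A) * (e : A))
          = b * (u : A) * ((↑e⁻¹ : A) * (e : A)) := by ring
        _ = b * (u : A) := by rw [this, mul_one]
    calc (-(σ b * σ ((↑e⁻¹ : A))) - -(b * (↑e⁻¹ : A))) * v
        = -(σ b * σ ((↑e⁻¹ : A)) * v) + b * (↑e⁻¹ : A) * v := by ring
      _ = -(σ b * 1) + b * (u : A) := by rw [h1, h2]
      _ = (u : A) * b - σ b := by ring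
      _ = σ a * (β * n) := by linear_combination -E2
      _ = β * ((u : A) * ((n : A) * a)) := by rw [E1]; ring
      _ = β * v := by rw [hv, he]
  -- cancel the unit v
  have := congrArg (· * (↑w⁻¹ : A)) key
  simpa [← hw, mul_assoc, Units.mul_inv_cancel_right] using this
end

section
/- Let (A, σ) be a difference ring and let G be a subgroup of the unit group Aˣ such that every nonzero element c ∈ A satisfying σ(c) = u·c for some u ∈ G is a unit of A. Let β ∈ A and let σ' be the ring automorphism of A[t] with σ'(a) = σ(a) for a ∈ A and σ'(t) = t + β. Then the following are equivalent: (1) there exist g ∈ A[t]∖A (a nonconstant polynomial) and u ∈ G with σ'(g) = u·g; (2) there exists g ∈ A with σ(g) = g + β; (3) const(A[t], σ') strictly contains const(A, σ), i.e., there exists a nonconstant polynomial g ∈ A[t] with σ'(g) = g. -/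
open Polynomial

section Aux
variable {A : Type*} [CommRing A] [CharZero A]

/-- The explicit formula for `σ'`. -/
lemma stmt8_form (σ : A ≃+* A) (β : A) (σ' : A[X] ≃+* A[X])
    (hC : ∀ a : A, σ' (C a) = C (σ a)) (hX : σ' X = X + C β) (p : A[X]) :
    σ' p = taylor β (p.map (σ : A →+* A)) := by
  have h : (σ' : A[X] →+* A[X]) = eval₂RingHom ((C : A →+* A[X]).comp (σ : A →+* A)) (X + C β) := by
    apply Polynomial.ringHom_ext
    · intro a; simpa using hC a
    · simpa using hX
  have := congrArg (fun f => f p) h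
  simp only [RingHom.coe_coe, coe_eval₂RingHom] at this
  rw [this, taylor_apply, comp, eval₂_map]

lemma stmt8_natDegree (σ : A ≃+* A) (β : A) (σ' : A[X] ≃+* A[X])
    (hC : ∀ a : A, σ' (C a) = C (σ a)) (hX : σ' X = X + C β) (p : A[X]) :
    (σ' p).natDegree = p.natDegree := by
  rw [stmt8_form σ β σ' hC hX, natDegree_taylor,
    natDegree_map_eq_of_injective σ.injective]

lemma stmt8_lead (σ : A ≃+* A) (β : A) (σ' : A[X] ≃+* A[X])
    (hC : ∀ a : A, σ' (C a) = C (σ a)) (hX : σ' X = X + C β) (p : A[X]) :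
    (σ' p).coeff p.natDegree = σ p.leadingCoeff := by
  rw [stmt8_form σ β σ' hC hX, taylor_coeff]
  set q := p.map (σ : A →+* A) with hq
  have hnd : q.natDegree = p.natDegree := natDegree_map_eq_of_injective σ.injective p
  have h0 : (hasseDeriv p.natDegree q).natDegree ≤ 0 := by
    have := natDegree_hasseDeriv_le q p.natDegree
    omega
  rw [eq_C_of_natDegree_le_zero h0, eval_C, hasseDeriv_coeff]
  simp only [Nat.zero_add, Nat.choose_self, one_mul, zero_add]
  rw [hq, coeff_map]
  rw [Nat.cast_one, one_mul, Polynomial.leadingCoeff]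
  rfl

lemma stmt8_deriv (σ : A ≃+* A) (β : A) (σ' : A[X] ≃+* A[X])
    (hC : ∀ a : A, σ' (C a) = C (σ a)) (hX : σ' X = X + C β) (p : A[X]) :
    derivative (σ' p) = σ' (derivative p) := by
  rw [stmt8_form σ β σ' hC hX, stmt8_form σ β σ' hC hX, taylor_apply, taylor_apply,
    derivative_comp, ← derivative_map]
  simp

end Aux

section Key
variable {A : Type*} [CommRing A] [CharZero A]

lemma stmt8_key (σ : A ≃+* A) (G : Subgroup Aˣ)
    (hG : ∀ c : A, c ≠ 0 → (∃ u ∈ G, σ c = (u : A) * c) → IsUnit c)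
    (β : A) (σ' : A[X] ≃+* A[X])
    (hC : ∀ a : A, σ' (C a) = C (σ a)) (hX : σ' X = X + C β) :
    ∀ n : ℕ, ∀ p : A[X], p.natDegree = n → 1 ≤ n → σ' p = p → ∃ g : A, σ g = g + β := by
  have hfix : ∀ c : A, c ≠ 0 → σ c = c → IsUnit c := fun c hc h =>
    hG c hc ⟨1, G.one_mem, by simpa using h⟩
  intro n
  induction n with
  | zero => intro p _ hn _; omega
  | succ n ih =>
    intro p hdeg hn hp
    have hpne : p ≠ 0 := by
      intro h; rw [h, natDegree_zero] at hdeg; omega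
    have hlcne : p.leadingCoeff ≠ 0 := leadingCoeff_ne_zero.mpr hpne
    have hlc : σ p.leadingCoeff = p.leadingCoeff := by
      have h1 := stmt8_lead σ β σ' hC hX p
      rw [hp] at h1
      exact h1.symm
    have hulc : IsUnit p.leadingCoeff := hfix _ hlcne hlc
    rcases Nat.eq_zero_or_pos n with h0 | hpos
    · -- degree 1 case
      subst h0
      obtain ⟨v, hv⟩ := hulc
      have hv1 : (v : A) = p.coeff 1 := by
        rw [hv]; unfold Polynomial.leadingCoeff; rw [hdeg]
      have hσv : σ (v : A) = (v : A) := by rw [hv]; exact hlc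
      have hσvi : σ ((v⁻¹ : Aˣ) : A) = ((v⁻¹ : Aˣ) : A) := by
        have h1 : σ ((v⁻¹ : Aˣ) : A) * (v : A) = 1 := by
          rw [← hσv, ← map_mul]; simp
        have h2 := v.inv_mul
        calc σ ((v⁻¹ : Aˣ) : A) = σ ((v⁻¹ : Aˣ) : A) * ((v : A) * ((v⁻¹ : Aˣ) : A)) := by
              rw [v.mul_inv, mul_one]
          _ = (σ ((v⁻¹ : Aˣ) : A) * (v : A)) * ((v⁻¹ : Aˣ) : A) := by ring
          _ = ((v⁻¹ : Aˣ) : A) := by rw [h1, one_mul]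
      -- coefficient-0 equation
      have he : p.coeff 0 = σ (p.coeff 0) + σ (p.coeff 1) * β := by
        have h1 := congrArg (fun q : A[X] => q.coeff 0) hp
        rw [stmt8_form σ β σ' hC hX, taylor_coeff_zero, eval_eq_sum_range,
          natDegree_map_eq_of_injective σ.injective, hdeg] at h1
        simp only [Finset.sum_range_succ, Finset.sum_range_one, coeff_map, pow_zero,
          mul_one, pow_one] at h1
        rw [Finset.sum_range_zero, zero_add] at h1
        exact h1.symm
      refine ⟨-(p.coeff 0 * ((v⁻¹ : Aˣ) : A)), ?_⟩
      have hσc : σ (p.coeff 0) = p.coeff 0 - (v : A) * β := by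
        rw [← hv1] at he
        rw [hσv] at he
        linear_combination -he
      rw [map_neg, map_mul, hσc, hσvi]
      have hvv : (v : A) * ((v⁻¹ : Aˣ) : A) = 1 := v.mul_inv
      linear_combination β * hvv
    · -- inductive step via derivative
      have hq : σ' (derivative p) = derivative p := by
        rw [← stmt8_deriv σ β σ' hC hX, hp]
      have hcn : p.coeff (n + 1) = p.leadingCoeff := by
        unfold Polynomial.leadingCoeff; rw [hdeg]
      have hnu : IsUnit ((n + 1 : ℕ) : A) :=
        hfix _ (Nat.cast_ne_zero.mpr (Nat.succ_ne_zero n)) (map_natCast σ.toRingHom (n + 1))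
      have hne : (derivative p).coeff n ≠ 0 := by
        rw [coeff_derivative]
        have : IsUnit (p.coeff (n + 1) * ((n + 1 : ℕ) : A)) := by
          rw [hcn]; exact hulc.mul hnu
        intro h
        rw [show ((n : A) + 1) = ((n + 1 : ℕ) : A) by push_cast; ring] at h
        exact this.ne_zero h
      have hdq : (derivative p).natDegree = n := by
        refine le_antisymm ?_ (le_natDegree_of_ne_zero hne)
        have := natDegree_derivative_le p
        omega
      exact ih (derivative p) hdq hpos hq

end Key

/-- Let `(A, σ)` be a difference ring and `G ≤ Aˣ` with every
nonzero semi-constant over `G` a unit, and `σ'` on `A[t]` extend `σ` with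
`σ'(t) = t + β`.  TFAE: (1) some nonconstant `g ∈ A[t]` satisfies `σ'(g) = u·g`
for some `u ∈ G`; (2) some `g ∈ A` satisfies `σ(g) = g + β`; (3) some nonconstant
`g ∈ A[t]` satisfies `σ'(g) = g`. -/
theorem stmt_8 {A : Type*} [CommRing A] [CharZero A]
    (σ : A ≃+* A) (G : Subgroup Aˣ)
    (hG : ∀ c : A, c ≠ 0 → (∃ u ∈ G, σ c = (u : A) * c) → IsUnit c)
    (β : A)
    (σ' : Polynomial A ≃+* Polynomial A)
    (hC : ∀ a : A, σ' (Polynomial.C a) = Polynomial.C (σ a))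
    (hX : σ' Polynomial.X = Polynomial.X + Polynomial.C β) :
    ((∃ g : Polynomial A, (¬ ∃ a : A, g = Polynomial.C a) ∧
        ∃ u ∈ G, σ' g = Polynomial.C ((u : Aˣ) : A) * g)
      ↔ (∃ g : A, σ g = g + β))
    ∧ ((∃ g : A, σ g = g + β)
      ↔ (∃ g : Polynomial A, (¬ ∃ a : A, g = Polynomial.C a) ∧ σ' g = g)) := by
  -- (2) → (3)
  have h23 : (∃ g : A, σ g = g + β) →
      ∃ g : A[X], (¬ ∃ a : A, g = C a) ∧ σ' g = g := by
    rintro ⟨g, hg⟩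
    refine ⟨X - C g, ?_, ?_⟩
    · rintro ⟨a, ha⟩
      have h1 := congrArg (fun q : A[X] => q.coeff 1) ha
      simp [coeff_X_one, coeff_C] at h1
    · rw [map_sub, hX, hC, hg, C_add]; ring
  -- (3) → (2)
  have h32 : (∃ g : A[X], (¬ ∃ a : A, g = C a) ∧ σ' g = g) →
      ∃ g : A, σ g = g + β := by
    rintro ⟨g, hgnc, hgfix⟩
    have hn : 1 ≤ g.natDegree := by
      rcases Nat.eq_zero_or_pos g.natDegree with h0 | h
      · exact absurd ⟨g.coeff 0, eq_C_of_natDegree_le_zero (le_of_eq h0)⟩ hgnc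
      · exact h
    exact stmt8_key σ G hG β σ' hC hX g.natDegree g rfl hn hgfix
  -- (1) → (2)
  have h12 : (∃ g : A[X], (¬ ∃ a : A, g = C a) ∧
      ∃ u ∈ G, σ' g = C ((u : Aˣ) : A) * g) → ∃ g : A, σ g = g + β := by
    rintro ⟨g, hgnc, u, huG, hgu⟩
    have hn : 1 ≤ g.natDegree := by
      rcases Nat.eq_zero_or_pos g.natDegree with h0 | h
      · exact absurd ⟨g.coeff 0, eq_C_of_natDegree_le_zero (le_of_eq h0)⟩ hgnc
      · exact h
    have hgne : g ≠ 0 := by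
      intro h; rw [h, natDegree_zero] at hn; omega
    have hlcne : g.leadingCoeff ≠ 0 := leadingCoeff_ne_zero.mpr hgne
    have hlead : σ g.leadingCoeff = (u : A) * g.leadingCoeff := by
      have h1 := stmt8_lead σ β σ' hC hX g
      rw [hgu, coeff_C_mul] at h1
      exact h1.symm
    obtain ⟨v, hv⟩ := hG _ hlcne ⟨u, huG, hlead⟩
    have hσv : σ (v : A) = (u : A) * (v : A) := by rw [hv]; exact hlead
    -- σ (v⁻¹) = v⁻¹ * u⁻¹
    have hσvi : σ ((v⁻¹ : Aˣ) : A) = ((v⁻¹ : Aˣ) : A) * ((u⁻¹ : Aˣ) : A) := by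
      have h1 : σ ((v⁻¹ : Aˣ) : A) * ((u : A) * (v : A)) = 1 := by
        rw [← hσv, ← map_mul]; simp
      have h2 : (((v⁻¹ : Aˣ) : A) * ((u⁻¹ : Aˣ) : A)) * ((u : A) * (v : A)) = 1 := by
        have hu := u.inv_mul
        have hvv := v.inv_mul
        calc (((v⁻¹ : Aˣ) : A) * ((u⁻¹ : Aˣ) : A)) * ((u : A) * (v : A))
            = (((u⁻¹ : Aˣ) : A) * (u : A)) * (((v⁻¹ : Aˣ) : A) * (v : A)) := by ring
          _ = 1 := by rw [hu, hvv, mul_one]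
      calc σ ((v⁻¹ : Aˣ) : A)
          = σ ((v⁻¹ : Aˣ) : A) * ((((u : A) * (v : A))) * ((((v⁻¹ : Aˣ) : A) * ((u⁻¹ : Aˣ) : A)))) := by
            rw [show (((u : A) * (v : A))) * ((((v⁻¹ : Aˣ) : A) * ((u⁻¹ : Aˣ) : A))) = 1 by
              linear_combination (((u:A) * (v:A))) * 0 + (by rw [mul_comm] at h2; exact h2 : ((((u : A) * (v : A))) * ((((v⁻¹ : Aˣ) : A) * ((u⁻¹ : Aˣ) : A)))) = 1), mul_one]
        _ = (σ ((v⁻¹ : Aˣ) : A) * ((u : A) * (v : A))) * (((v⁻¹ : Aˣ) : A) * ((u⁻¹ : Aˣ) : A)) := by ring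
        _ = ((v⁻¹ : Aˣ) : A) * ((u⁻¹ : Aˣ) : A) := by rw [h1, one_mul]
    -- normalize
    set p := g * C ((v⁻¹ : Aˣ) : A) with hpdef
    have hp' : σ' p = p := by
      rw [hpdef, map_mul, hgu, hC, hσvi]
      have hscal : (u : A) * (((v⁻¹ : Aˣ) : A) * ((u⁻¹ : Aˣ) : A)) = ((v⁻¹ : Aˣ) : A) := by
        have := u.mul_inv
        linear_combination ((v⁻¹ : Aˣ) : A) * this
      rw [mul_comm (C ((u : Aˣ) : A)) g, mul_assoc, ← C_mul, hscal]
    have hpg : p * C (v : A) = g := by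
      rw [hpdef, mul_assoc, ← C_mul, v.inv_mul, C_1, mul_one]
    have hnp : 1 ≤ p.natDegree := by
      have h1 : g.natDegree ≤ p.natDegree := by
        conv_lhs => rw [← hpg]
        exact natDegree_mul_le.trans (by simp)
      omega
    exact stmt8_key σ G hG β σ' hC hX p.natDegree p rfl hnp hp'
  refine ⟨⟨h12, fun h => ?_⟩, h23, h32⟩
  obtain ⟨g, hnc, hfix⟩ := h23 h
  exact ⟨g, hnc, 1, G.one_mem, by simpa using hfix⟩
end

section
/- Let F be a field, σ₀ a ring automorphism of F, β ∈ F, and let σ be the field automorphism of the rational function field F(t) with σ(a) = σ₀(a) for a ∈ F and σ(t) = t + β. Then const(F(t), σ) = const(F, σ₀) (every σ-invariant rational function lies in F and is σ₀-invariant) if and only if there exists no g ∈ F with σ₀(g) = g + β. -/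
open Polynomial

section aux

variable {F : Type*} [Field F] [CharZero F]

private noncomputable def stmt9tau (σ₀ : F ≃+* F) (β : F) : F[X] →+* F[X] :=
  eval₂RingHom (Polynomial.C.comp (σ₀ : F →+* F)) (X + C β)

private lemma stmt9tau_C (σ₀ : F ≃+* F) (β : F) (a : F) :
    stmt9tau σ₀ β (C a) = C (σ₀ a) := eval₂_C _ _

private lemma stmt9tau_X (σ₀ : F ≃+* F) (β : F) :
    stmt9tau σ₀ β X = X + C β := eval₂_X _ _

private lemma stmt9tau_eq (σ₀ : F ≃+* F) (β : F) (p : F[X]) :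
    stmt9tau σ₀ β p = (p.map (σ₀ : F →+* F)).comp (X + C β) := by
  rw [comp, eval₂_map]; rfl

private lemma stmt9tau_natDegree (σ₀ : F ≃+* F) (β : F) (p : F[X]) :
    (stmt9tau σ₀ β p).natDegree = p.natDegree := by
  rw [stmt9tau_eq, natDegree_comp, natDegree_X_add_C, mul_one, natDegree_map]

private lemma stmt9tau_injective (σ₀ : F ≃+* F) (β : F) :
    Function.Injective (stmt9tau σ₀ β) := by
  intro p q h
  rw [stmt9tau_eq, stmt9tau_eq, ← taylor_apply, ← taylor_apply] at h
  exact Polynomial.map_injective _ σ₀.injective (taylor_injective β h)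

private lemma stmt9tau_monic (σ₀ : F ≃+* F) (β : F) {p : F[X]} (hp : p.Monic) :
    (stmt9tau σ₀ β p).Monic := by
  have h1 : (X + C β : F[X]).natDegree ≠ 0 := by rw [natDegree_X_add_C]; exact one_ne_zero
  unfold Monic
  rw [stmt9tau_eq, leadingCoeff_comp h1, (monic_X_add_C β).leadingCoeff, one_pow, mul_one,
    (hp.map (σ₀ : F →+* F)).leadingCoeff]

private lemma stmt9tau_derivative (σ₀ : F ≃+* F) (β : F) (p : F[X]) :
    derivative (stmt9tau σ₀ β p) = stmt9tau σ₀ β (derivative p) := by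
  rw [stmt9tau_eq, derivative_comp, stmt9tau_eq, derivative_map]
  simp

private lemma stmt9_coeffs_eq (u v a b β : F)
    (hfix : C u * (X + C β) + C v = C a * X + C b) : u = a ∧ u * β + v = b := by
  constructor
  · have h := congrArg (fun q : F[X] => coeff q 1) hfix
    simp only [mul_add, coeff_add, coeff_C_mul, coeff_X_one, mul_one, coeff_C] at h
    simpa using h
  · have h := congrArg (fun q : F[X] => coeff q 0) hfix
    simp only [mul_add, coeff_add, coeff_C_mul, coeff_X_zero, mul_zero, coeff_C] at h
    simpa using h

private lemma stmt9_exists_g (σ₀ : F ≃+* F) (β : F) :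
    ∀ n (p : F[X]), p.natDegree ≤ n → stmt9tau σ₀ β p = p → p.natDegree ≠ 0 →
      ∃ g : F, σ₀ g = g + β := by
  intro n
  induction n with
  | zero => intro p hp _ hne; omega
  | succ n ih =>
    intro p hpn hfix hne
    by_cases h1 : p.natDegree = 1
    · -- base case: degree one
      have hp := eq_X_add_C_of_natDegree_le_one h1.le
      have hp0 : p ≠ 0 := fun h0 => by
        rw [h0, natDegree_zero] at h1; exact one_ne_zero h1.symm
      have ha0 : p.coeff 1 ≠ 0 := by
        have := leadingCoeff_ne_zero.2 hp0
        rwa [leadingCoeff, h1] at this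
      rw [hp] at hfix
      rw [map_add, map_mul, stmt9tau_C, stmt9tau_C, stmt9tau_X] at hfix
      obtain ⟨hcoeff1, hcoeff0⟩ := stmt9_coeffs_eq _ _ _ _ _ hfix
      refine ⟨-(p.coeff 0) / (p.coeff 1), ?_⟩
      have hb' : σ₀ (p.coeff 0) = p.coeff 0 - p.coeff 1 * β := by
        linear_combination hcoeff0 - β * hcoeff1
      rw [map_div₀, map_neg, hcoeff1, hb']
      field_simp
      ring
    · -- inductive step: take derivative
      have hpos : 0 < p.natDegree := Nat.pos_of_ne_zero hne
      have hd : (derivative p).natDegree = p.natDegree - 1 :=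
        natDegree_eq_of_degree_eq_some (degree_derivative_eq p hpos)
      refine ih (derivative p) ?_ ?_ ?_
      · omega
      · rw [← stmt9tau_derivative, hfix]
      · omega

end aux

/-- Let `F` be a field of characteristic zero, `σ₀` an automorphism
of `F`, `β ∈ F`, and `σ` the automorphism of `F(t)` extending `σ₀` with
`σ(t) = t + β`.  Then `const(F(t), σ) = const(F, σ₀)` iff there is no `g ∈ F` with
`σ₀(g) = g + β`. -/
theorem stmt_9 {F : Type*} [Field F] [CharZero F]
    (σ₀ : F ≃+* F) (β : F)
    (σ : RatFunc F ≃+* RatFunc F)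
    (hC : ∀ a : F, σ (RatFunc.C a) = RatFunc.C (σ₀ a))
    (hX : σ RatFunc.X = RatFunc.X + RatFunc.C β) :
    (∀ r : RatFunc F, σ r = r → ∃ c : F, σ₀ c = c ∧ r = RatFunc.C c)
      ↔ ¬ ∃ g : F, σ₀ g = g + β := by
  set A := algebraMap F[X] (RatFunc F)
  have hbridge : ∀ p : F[X], σ (A p) = A (stmt9tau σ₀ β p) := by
    have : (σ : RatFunc F →+* RatFunc F).comp A = A.comp (stmt9tau σ₀ β) := by
      apply Polynomial.ringHom_ext
      · intro a
        simp only [RingHom.comp_apply, RingHom.coe_coe]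
        rw [show A (Polynomial.C a) = RatFunc.C a from RatFunc.algebraMap_C a,
          hC, stmt9tau_C]
        exact (RatFunc.algebraMap_C _).symm
      · simp only [RingHom.comp_apply, RingHom.coe_coe]
        rw [show A Polynomial.X = RatFunc.X from RatFunc.algebraMap_X, hX, stmt9tau_X,
          map_add, RatFunc.algebraMap_X, RatFunc.algebraMap_C]
    exact fun p => RingHom.congr_fun this p
  constructor
  · rintro hconst ⟨g, hg⟩
    have hfix : σ (RatFunc.X - RatFunc.C g) = RatFunc.X - RatFunc.C g := by
      rw [map_sub, hC, hX, hg, map_add]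
      ring
    obtain ⟨c, _, hc⟩ := hconst _ hfix
    have : RatFunc.X = RatFunc.C (c + g) := by
      rw [map_add]; rw [sub_eq_iff_eq_add] at hc; rw [hc]
    have : (Polynomial.X : F[X]) = Polynomial.C (c + g) := by
      apply RatFunc.algebraMap_injective F
      rw [RatFunc.algebraMap_X, RatFunc.algebraMap_C, this]
    exact Polynomial.X_ne_C _ this
  · intro hno r hr
    set p := r.num with hp
    set q := r.denom with hq
    have hq0 : q ≠ 0 := r.denom_ne_zero
    have hr' : A (stmt9tau σ₀ β p) * A q = A (stmt9tau σ₀ β q) * A p := by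
      have h1 : σ r = A (stmt9tau σ₀ β p) / A (stmt9tau σ₀ β q) := by
        rw [← r.num_div_denom, map_div₀, hbridge, hbridge]
      have hq1 : A (stmt9tau σ₀ β q) ≠ 0 :=
        RatFunc.algebraMap_ne_zero (fun h => hq0 (stmt9tau_injective σ₀ β (by simp [h])))
      have hq2 : A q ≠ 0 := RatFunc.algebraMap_ne_zero hq0
      rw [hr] at h1
      have h2 : A p / A q = A (stmt9tau σ₀ β p) / A (stmt9tau σ₀ β q) := by
        rw [← h1, r.num_div_denom]
      rw [div_eq_div_iff hq2 hq1] at h2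
      linear_combination -h2
    have hcross : stmt9tau σ₀ β p * q = stmt9tau σ₀ β q * p := by
      apply RatFunc.algebraMap_injective F
      rw [map_mul, map_mul, hr']
    have hcop : IsCoprime p q := r.isCoprime_num_denom
    have hcopτ : IsCoprime (stmt9tau σ₀ β p) (stmt9tau σ₀ β q) := hcop.map _
    -- τ q = q
    have hdvd1 : stmt9tau σ₀ β q ∣ q := by
      exact (hcopτ.symm).dvd_of_dvd_mul_right ⟨p, by linear_combination hcross⟩
    have hdvd2 : q ∣ stmt9tau σ₀ β q := by
      exact (hcop.symm).dvd_of_dvd_mul_right ⟨stmt9tau σ₀ β p, by linear_combination -hcross⟩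
    have hqfix : stmt9tau σ₀ β q = q :=
      eq_of_monic_of_associated (stmt9tau_monic σ₀ β r.monic_denom) r.monic_denom
        (associated_of_dvd_dvd hdvd1 hdvd2)
    have hpfix : stmt9tau σ₀ β p = p := by
      have := hcross
      rw [hqfix] at this
      exact mul_right_cancel₀ hq0 (by linear_combination this)
    -- degrees are zero
    have hpdeg : p.natDegree = 0 := by
      by_contra hne
      exact hno (stmt9_exists_g σ₀ β p.natDegree p le_rfl hpfix hne)
    have hqdeg : q.natDegree = 0 := by
      by_contra hne
      exact hno (stmt9_exists_g σ₀ β q.natDegree q le_rfl hqfix hne)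
    have hq1 : q = 1 := eq_one_of_monic_natDegree_zero r.monic_denom hqdeg
    refine ⟨p.coeff 0, ?_, ?_⟩
    · have := hpfix
      rw [eq_C_of_natDegree_eq_zero hpdeg, stmt9tau_C] at this
      exact Polynomial.C_injective this
    · rw [← r.num_div_denom, ← hp, ← hq, hq1, map_one, div_one,
        eq_C_of_natDegree_eq_zero hpdeg, RatFunc.algebraMap_C]
      simp
end

section
/- Let (A, σ) be a difference ring and let G be a subgroup of the unit group Aˣ such that every nonzero element c ∈ A satisfying σ(c) = u·c for some u ∈ G is a unit of A. Let σ' be the ring automorphism of A[t] with σ'|_A = σ and σ'(t) = t + β for some β ∈ A, and assume this is a Σ-extension, i.e., const(A[t], σ') = const(A, σ). Then sconst_G(A[t], σ') = sconst_G(A, σ): every polynomial p ∈ A[t] with σ'(p) = u·p for some u ∈ G is a constant polynomial whose coefficient lies in sconst_G(A, σ). -/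
/-- Auxiliary: the coefficient of `taylor r q` at any index at least the degree
of `q` agrees with the corresponding coefficient of `q`. -/
lemma taylor_coeff_of_natDegree_le {A : Type*} [CommRing A] (r : A) (q : Polynomial A)
    (n : ℕ) (h : q.natDegree ≤ n) :
    (Polynomial.taylor r q).coeff n = q.coeff n := by
  rw [Polynomial.taylor_coeff]
  have hh : Polynomial.hasseDeriv n q = Polynomial.C (q.coeff n) := by
    ext m
    rw [Polynomial.hasseDeriv_coeff]
    cases m with
    | zero => simp
    | succ k =>
      have hz : q.coeff (k + 1 + n) = 0 :=
        Polynomial.coeff_eq_zero_of_natDegree_lt (by omega)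
      simp [hz, Polynomial.coeff_C]
  rw [hh]; simp

/-- Let `(A, σ)` be a difference ring and `G ≤ Aˣ` with every
nonzero semi-constant over `G` a unit.  If `σ'` on `A[t]` extends `σ` with
`σ'(t) = t + β` and is a Σ-extension (`const(A[t], σ') = const(A, σ)`), then
`sconst_G(A[t], σ') = sconst_G(A, σ)`: every `p ∈ A[t]` with `σ'(p) = u·p` for
some `u ∈ G` is a constant polynomial whose coefficient is a semi-constant over
`G`. -/
theorem stmt_10 {A : Type*} [CommRing A] [CharZero A]
    (σ : A ≃+* A) (G : Subgroup Aˣ)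
    (hG : ∀ c : A, c ≠ 0 → (∃ u ∈ G, σ c = (u : A) * c) → IsUnit c)
    (β : A)
    (σ' : Polynomial A ≃+* Polynomial A)
    (hC : ∀ a : A, σ' (Polynomial.C a) = Polynomial.C (σ a))
    (hX : σ' Polynomial.X = Polynomial.X + Polynomial.C β)
    (hSigma : ∀ p : Polynomial A, σ' p = p → ∃ c : A, σ c = c ∧ p = Polynomial.C c) :
    ∀ p : Polynomial A, (∃ u ∈ G, σ' p = Polynomial.C (u : A) * p) →
      ∃ c : A, (∃ v ∈ G, σ c = (v : A) * c) ∧ p = Polynomial.C c := by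
  classical
  intro p ⟨u, huG, hup⟩
  by_cases hp : p = 0
  · exact ⟨0, ⟨u, huG, by simp⟩, by simp [hp]⟩
  -- σ' is taylor expansion of map σ
  have hform : ∀ q : Polynomial A,
      σ' q = Polynomial.taylor β (q.map (σ : A →+* A)) := by
    intro q
    have hhom : (σ' : Polynomial A →+* Polynomial A) =
        (Polynomial.compRingHom (Polynomial.X + Polynomial.C β)).comp
          (Polynomial.mapRingHom (σ : A →+* A)) := by
      apply Polynomial.ringHom_ext
      · intro a
        simpa using hC a
      · simpa using hX
    rw [Polynomial.taylor_apply]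
    exact DFunLike.congr_fun hhom q
  set n := p.natDegree with hn
  set a := p.coeff n with ha
  have ha0 : a ≠ 0 := Polynomial.leadingCoeff_ne_zero.mpr hp
  -- σ a = u * a
  have hua : σ a = (u : A) * a := by
    have h1 : (σ' p).coeff n = σ a := by
      rw [hform, taylor_coeff_of_natDegree_le β _ n
        (le_trans Polynomial.natDegree_map_le (le_of_eq hn.symm)),
        Polynomial.coeff_map]
      rfl
    have h2 : (Polynomial.C (u : A) * p).coeff n = (u : A) * a := by
      rw [Polynomial.coeff_C_mul]
    rw [hup, h2] at h1
    exact h1.symm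
  obtain ⟨w, hw⟩ := hG a ha0 ⟨u, huG, hua⟩
  -- key: σ (↑w⁻¹) * ↑u = ↑w⁻¹
  have h1 : σ (↑w⁻¹ : A) * ((u : A) * (↑w : A)) = 1 := by
    have : σ (↑w⁻¹ : A) * σ (↑w : A) = 1 := by
      rw [← map_mul, ← map_one σ]; congr 1; simp
    rwa [hw, hua, ← hw] at this
  have hw' : σ (↑w⁻¹ : A) * (u : A) = (↑w⁻¹ : A) := by
    calc σ (↑w⁻¹ : A) * (u : A)
        = σ (↑w⁻¹ : A) * (u : A) * ((↑w : A) * (↑w⁻¹ : A)) := by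
          rw [Units.mul_inv, mul_one]
      _ = (σ (↑w⁻¹ : A) * ((u : A) * (↑w : A))) * (↑w⁻¹ : A) := by ring
      _ = 1 * (↑w⁻¹ : A) := by rw [h1]
      _ = (↑w⁻¹ : A) := one_mul _
  set q := Polynomial.C (↑w⁻¹ : A) * p with hq
  have hqfix : σ' q = q := by
    rw [hq, map_mul, hC, hup, ← mul_assoc, ← Polynomial.C_mul, hw']
  obtain ⟨c, hc, hqc⟩ := hSigma q hqfix
  refine ⟨(↑w : A) * c, ⟨u, huG, ?_⟩, ?_⟩
  · rw [map_mul, hc, hw, hua]; ring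
  · have hpq : p = Polynomial.C (↑w : A) * q := by
      rw [hq, ← mul_assoc, ← Polynomial.C_mul]
      simp
    rw [hpq, hqc, ← Polynomial.C_mul]
end

section
/- Let (A, σ) be a difference ring with A reduced, and assume every nonzero element c ∈ A satisfying σ(c) = u·c for some unit u ∈ Aˣ is itself a unit of A. Let σ' be the ring automorphism of A[t] with σ'|_A = σ and σ'(t) = t + β for some β ∈ A, and assume const(A[t], σ') = const(A, σ) (a Σ-extension). Then the set of nonzero p ∈ A[t] satisfying σ'(p) = v·p for some unit v ∈ A[t]ˣ equals the set of constant polynomials with coefficient a unit of A; in particular gsconst(A[t], σ')∖{0} = gsconst(A, σ)∖{0} = Aˣ. -/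
open Polynomial

/-- An automorphism of `A[t]` sending `C a ↦ C (f a)` and `X ↦ X + C b` acts as
map-then-compose. -/
lemma sigma'_eq {A : Type*} [CommRing A] (f : A ≃+* A) (b : A)
    (τ : Polynomial A ≃+* Polynomial A)
    (hC : ∀ a : A, τ (Polynomial.C a) = Polynomial.C (f a))
    (hX : τ Polynomial.X = Polynomial.X + Polynomial.C b) (p : Polynomial A) :
    τ p = (p.map (f : A →+* A)).comp (Polynomial.X + Polynomial.C b) := by
  have h : (τ : Polynomial A →+* Polynomial A) =
      Polynomial.eval₂RingHom ((Polynomial.C).comp (f : A →+* A)) (Polynomial.X + Polynomial.C b) := by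
    apply Polynomial.ringHom_ext
    · intro a; simpa using hC a
    · simpa using hX
  have := congrArg (fun g : Polynomial A →+* Polynomial A => g p) h
  simp only [RingHom.coe_coe, coe_eval₂RingHom] at this
  rw [this, Polynomial.comp, Polynomial.eval₂_map]

lemma natDegree_tau_le {A : Type*} [CommRing A] [Nontrivial A] (f : A ≃+* A) (b : A)
    (τ : Polynomial A ≃+* Polynomial A)
    (hC : ∀ a : A, τ (Polynomial.C a) = Polynomial.C (f a))
    (hX : τ Polynomial.X = Polynomial.X + Polynomial.C b) (p : Polynomial A) :
    (τ p).natDegree ≤ p.natDegree := by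
  rw [sigma'_eq f b τ hC hX p]
  calc ((p.map (f : A →+* A)).comp (Polynomial.X + Polynomial.C b)).natDegree
      ≤ (p.map (f : A →+* A)).natDegree * (Polynomial.X + Polynomial.C b).natDegree :=
        Polynomial.natDegree_comp_le
    _ ≤ p.natDegree * 1 := by
        rw [Polynomial.natDegree_map_eq_of_injective f.injective]
        exact Nat.mul_le_mul_left _ (Polynomial.natDegree_X_add_C b).le
    _ = p.natDegree := mul_one _

/-- Let `(A, σ)` be a difference ring with `A` reduced such that
every nonzero `c ∈ A` with `σ(c) = u·c` for some unit `u ∈ Aˣ` is a unit.  If `σ'`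
on `A[t]` extends `σ` with `σ'(t) = t + β` and is a Σ-extension, then the nonzero
`p ∈ A[t]` with `σ'(p) = v·p` for some unit `v ∈ A[t]ˣ` are exactly the constant
polynomials with unit coefficient (`gsconst(A[t],σ')∖{0} = gsconst(A,σ)∖{0} = Aˣ`). -/
theorem stmt_11 {A : Type*} [CommRing A] [CharZero A]
    (hred : IsReduced A)
    (σ : A ≃+* A)
    (hG : ∀ c : A, c ≠ 0 → (∃ u : Aˣ, σ c = (u : A) * c) → IsUnit c)
    (β : A)
    (σ' : Polynomial A ≃+* Polynomial A)
    (hC : ∀ a : A, σ' (Polynomial.C a) = Polynomial.C (σ a))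
    (hX : σ' Polynomial.X = Polynomial.X + Polynomial.C β)
    (hSigma : ∀ p : Polynomial A, σ' p = p → ∃ c : A, σ c = c ∧ p = Polynomial.C c) :
    ∀ p : Polynomial A,
      (p ≠ 0 ∧ ∃ v : (Polynomial A)ˣ, σ' p = (v : Polynomial A) * p)
        ↔ ∃ a : Aˣ, p = Polynomial.C (a : A) := by
  -- the inverse automorphism has the same shape
  have hC' : ∀ a : A, σ'.symm (Polynomial.C a) = Polynomial.C (σ.symm a) := by
    intro a
    apply σ'.injective
    rw [σ'.apply_symm_apply, hC, σ.apply_symm_apply]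
  have hX' : σ'.symm Polynomial.X = Polynomial.X + Polynomial.C (-σ.symm β) := by
    apply σ'.injective
    rw [σ'.apply_symm_apply, map_add, hX, hC, map_neg, σ.apply_symm_apply, map_neg]
    ring
  -- σ' preserves natDegree
  have hdeg : ∀ p : Polynomial A, (σ' p).natDegree = p.natDegree := by
    intro p
    refine le_antisymm (natDegree_tau_le σ β σ' hC hX p) ?_
    have := natDegree_tau_le σ.symm (-σ.symm β) σ'.symm hC' hX' (σ' p)
    rwa [σ'.symm_apply_apply] at this
  -- leading coefficient of σ' p is σ of the leading coefficient of p
  have hlead : ∀ p : Polynomial A, (σ' p).leadingCoeff = σ p.leadingCoeff := by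
    intro p
    have h1 : (σ' p).leadingCoeff = (σ' p).coeff p.natDegree := by
      rw [Polynomial.leadingCoeff, hdeg]
    rw [h1, sigma'_eq σ β σ' hC hX p]
    have hq1 : (Polynomial.X + Polynomial.C β).natDegree = 1 := Polynomial.natDegree_X_add_C β
    have hdm : (p.map (σ : A →+* A)).natDegree = p.natDegree :=
      Polynomial.natDegree_map_eq_of_injective σ.injective p
    have := Polynomial.coeff_comp_degree_mul_degree
      (p := p.map (σ : A →+* A)) (q := Polynomial.X + Polynomial.C β) (by rw [hq1]; exact one_ne_zero)
    rw [hq1, mul_one, hdm] at this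
    rw [this, Polynomial.leadingCoeff_map_of_injective σ.injective]
    have : (Polynomial.X + Polynomial.C β).leadingCoeff = 1 :=
      (Polynomial.monic_X_add_C β).leadingCoeff
    rw [this, one_pow, mul_one]
    rfl
  intro p
  constructor
  · rintro ⟨hp, v, hv⟩
    -- v is a constant unit
    obtain ⟨hu0, hnil⟩ := Polynomial.isUnit_iff_coeff_isUnit_isNilpotent.mp v.isUnit
    have hvconst : (v : Polynomial A) = Polynomial.C ((v : Polynomial A).coeff 0) := by
      ext i
      cases i with
      | zero => simp
      | succ n =>
        have hn : IsNilpotent ((v : Polynomial A).coeff (n + 1)) := hnil _ (Nat.succ_ne_zero n)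
        haveI := hred
        simp [hn.eq_zero]
    set u : A := (v : Polynomial A).coeff 0 with hu
    obtain ⟨uu, huu⟩ := hu0
    have hGu : ∀ c : A, c ≠ 0 → σ c = u * c → IsUnit c := fun c h1 h2 =>
      hG c h1 ⟨uu, by rw [huu]; exact h2⟩
    -- leading coefficient relation: σ c = u * c
    have hc0 : p.leadingCoeff ≠ 0 := Polynomial.leadingCoeff_ne_zero.mpr hp
    have hlc : σ p.leadingCoeff = u * p.leadingCoeff := by
      have h1 : (σ' p).leadingCoeff = ((v : Polynomial A) * p).leadingCoeff := by rw [hv]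
      have h2 : ((v : Polynomial A) * p).leadingCoeff = u * p.leadingCoeff := by
        rw [hvconst]
        have : (Polynomial.C u * p).coeff p.natDegree = u * p.coeff p.natDegree := by
          simp [Polynomial.coeff_C_mul]
        have hd : (Polynomial.C u * p).natDegree = p.natDegree := by
          have := hdeg p
          rw [hv, hvconst] at this
          exact this
        rw [Polynomial.leadingCoeff, hd, this, Polynomial.leadingCoeff]
      rw [hlead] at h1
      rw [h1, h2]
    have hcunit : IsUnit p.leadingCoeff := hGu _ hc0 hlc
    obtain ⟨cu, hcu⟩ := hcunit
    -- normalize p to a monic-ish fixed polynomial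
    have key : σ ((↑cu⁻¹ : A)) * u = (↑cu⁻¹ : A) := by
      have h2 : u * (cu : A) = σ (cu : A) := by rw [hcu]; exact hlc.symm
      have hcan : σ ((↑cu⁻¹ : A)) * u * (cu : A) = 1 := by
        rw [mul_assoc, h2, ← map_mul]
        simp
      calc σ ((↑cu⁻¹ : A)) * u = σ ((↑cu⁻¹ : A)) * u * ((cu : A) * (↑cu⁻¹ : A)) := by simp
        _ = (σ ((↑cu⁻¹ : A)) * u * (cu : A)) * (↑cu⁻¹ : A) := by ring
        _ = (↑cu⁻¹ : A) := by rw [hcan, one_mul]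
    have hq : σ' (Polynomial.C (↑cu⁻¹ : A) * p) = Polynomial.C (↑cu⁻¹ : A) * p := by
      rw [map_mul, hC, hv, hvconst]
      rw [← mul_assoc, ← Polynomial.C_mul, key]
    obtain ⟨d, hd1, hd2⟩ := hSigma _ hq
    have hpd : p = Polynomial.C ((cu : A) * d) := by
      have : Polynomial.C (cu : A) * (Polynomial.C (↑cu⁻¹ : A) * p) = p := by
        rw [← mul_assoc, ← Polynomial.C_mul]
        simp
      rw [← this, hd2, ← Polynomial.C_mul]
    have hne : (cu : A) * d ≠ 0 := by
      intro h
      rw [h, map_zero] at hpd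
      exact hp hpd
    have hσe : σ ((cu : A) * d) = u * ((cu : A) * d) := by
      rw [map_mul, hd1, hcu, hlc]
      ring
    have : IsUnit ((cu : A) * d) := hGu _ hne hσe
    obtain ⟨a, ha⟩ := this
    exact ⟨a, by rw [hpd, ha]⟩
  · rintro ⟨a, rfl⟩
    refine ⟨by simp, ?_⟩
    have hunit : IsUnit (Polynomial.C (σ (a : A) * (↑a⁻¹ : A))) := by
      refine IsUnit.map (Polynomial.C : A →+* Polynomial A) ?_
      exact ((Units.map (σ : A →* A)) a).isUnit.mul a⁻¹.isUnit
    obtain ⟨v, hv⟩ := hunit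
    refine ⟨v, ?_⟩
    rw [hC, hv, ← Polynomial.C_mul]
    congr 1
    rw [mul_assoc]
    simp
end

section
/- Let F be a field, σ₀ a ring automorphism of F, α ∈ F∖{0}, and let σ be the field automorphism of the rational function field F(t) with σ(a) = σ₀(a) for a ∈ F and σ(t) = α·t. Then const(F(t), σ) = const(F, σ₀) (every σ-invariant rational function lies in F and is σ₀-invariant) if and only if there exist no g ∈ F∖{0} and integer m > 0 with σ₀(g) = α^m·g. -/
open Polynomial

private lemma coeff_tau {F : Type*} [Field F] (σ₀ : F ≃+* F) (α : F) (f : F[X]) (n : ℕ) :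
    ((f.map (σ₀ : F →+* F)).comp (C α * X)).coeff n = σ₀ (f.coeff n) * α ^ n := by
  induction f using Polynomial.induction_on' with
  | add p q hp hq => simp [add_comp, hp, hq, add_mul]
  | monomial i a =>
    rw [map_monomial, monomial_comp, mul_pow, ← C_pow, mul_left_comm, ← mul_assoc, ← C_mul,
      coeff_C_mul_X_pow, coeff_monomial]
    by_cases h : n = i
    · simp [h, mul_comm]
    · rw [if_neg h, if_neg (fun hi => h hi.symm)]; simp

/-- Let `F` be a field of characteristic zero, `σ₀` an
automorphism of `F`, `α ∈ F∖{0}`, and `σ` the automorphism of `F(t)` extending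
`σ₀` with `σ(t) = α·t`.  Then `const(F(t), σ) = const(F, σ₀)` iff there are no
`g ∈ F∖{0}` and integer `m > 0` with `σ₀(g) = α^m·g`. -/
theorem stmt_12 {F : Type*} [Field F] [CharZero F]
    (σ₀ : F ≃+* F) (α : F) (hα : α ≠ 0)
    (σ : RatFunc F ≃+* RatFunc F)
    (hC : ∀ a : F, σ (RatFunc.C a) = RatFunc.C (σ₀ a))
    (hX : σ RatFunc.X = RatFunc.C α * RatFunc.X) :
    (∀ r : RatFunc F, σ r = r → ∃ c : F, σ₀ c = c ∧ r = RatFunc.C c)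
      ↔ ¬ ∃ (g : F) (m : ℕ), g ≠ 0 ∧ 0 < m ∧ σ₀ g = α ^ m * g := by
  constructor
  · rintro h ⟨g, m, hg, hm, hσg⟩
    have hfix : σ (RatFunc.C g⁻¹ * RatFunc.X ^ m) = RatFunc.C g⁻¹ * RatFunc.X ^ m := by
      rw [map_mul, map_pow, hX, hC, map_inv₀, hσg, mul_pow, ← map_pow, ← mul_assoc,
        ← map_mul]
      congr 2
      field_simp
    obtain ⟨c, -, hrc⟩ := h (RatFunc.C g⁻¹ * RatFunc.X ^ m) hfix
    have h1 : (RatFunc.X : RatFunc F) ^ m = RatFunc.C g * RatFunc.C c := by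
      rw [← hrc, ← mul_assoc, ← map_mul, mul_inv_cancel₀ hg, map_one, one_mul]
    have h2 : algebraMap F[X] (RatFunc F) (X ^ m) =
        algebraMap F[X] (RatFunc F) (Polynomial.C (g * c)) := by
      rw [map_pow, RatFunc.algebraMap_X, RatFunc.algebraMap_C, map_mul, h1]
    have h3 := RatFunc.algebraMap_injective F h2
    have h4 := congrArg natDegree h3
    rw [natDegree_X_pow, natDegree_C] at h4
    omega
  · intro hno r hr
    set τ : F[X] →+* F[X] :=
      ((aeval (C α * X : F[X])).toRingHom.comp (mapRingHom (σ₀ : F →+* F))) with hτdef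
    have hcoeff : ∀ (f : F[X]) (n : ℕ), (τ f).coeff n = σ₀ (f.coeff n) * α ^ n := by
      intro f n
      exact coeff_tau σ₀ α f n
    have hτinj : Function.Injective τ := by
      intro a b hab
      ext n
      have h1 := congrArg (fun f => Polynomial.coeff f n) hab
      simp only [hcoeff] at h1
      exact σ₀.injective (mul_right_cancel₀ (pow_ne_zero n hα) h1)
    have hcompat : ∀ f : F[X], σ (algebraMap F[X] (RatFunc F) f) = algebraMap _ _ (τ f) := by
      intro f
      have h1 : (σ : RatFunc F →+* RatFunc F).comp (algebraMap F[X] (RatFunc F))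
          = (algebraMap F[X] (RatFunc F)).comp τ := by
        apply Polynomial.ringHom_ext
        · intro a
          simp [τ, RatFunc.algebraMap_C, hC]
        · simp [τ, RatFunc.algebraMap_X, RatFunc.algebraMap_C, hX]
      exact RingHom.congr_fun h1 f
    by_cases hp0 : r.num = 0
    · refine ⟨0, by simp, ?_⟩
      rw [RatFunc.num_eq_zero_iff.mp hp0, map_zero]
    set p := r.num with hp
    set q := r.denom with hq
    set d := q.natDegree with hd
    have hq0 : q ≠ 0 := r.denom_ne_zero
    have hqmon : q.Monic := r.monic_denom
    have hτq0 : τ q ≠ 0 := fun h => hq0 (hτinj (by rw [h, map_zero]))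
    have key : τ p * q = p * τ q := by
      apply RatFunc.algebraMap_injective F
      have h1 : algebraMap F[X] (RatFunc F) (τ p) / algebraMap _ _ (τ q)
          = algebraMap _ _ p / algebraMap _ _ q := by
        rw [← hcompat, ← hcompat, ← map_div₀ σ, RatFunc.num_div_denom]
        exact hr
      rw [div_eq_div_iff (RatFunc.algebraMap_ne_zero hτq0)
        (RatFunc.algebraMap_ne_zero hq0)] at h1
      rw [map_mul, map_mul]
      exact h1
    have hcop : IsCoprime p q := r.isCoprime_num_denom
    have hdvd : q ∣ τ q :=
      hcop.symm.dvd_of_dvd_mul_left ⟨τ p, by rw [← key]; ring⟩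
    obtain ⟨k, hk⟩ := hdvd
    have hk0 : k ≠ 0 := fun h => hτq0 (by rw [hk, h, mul_zero])
    have hτq_deg : (τ q).natDegree ≤ d := by
      apply natDegree_le_iff_coeff_eq_zero.mpr
      intro n hn
      rw [hcoeff, coeff_eq_zero_of_natDegree_lt hn, map_zero, zero_mul]
    have hkdeg : k.natDegree = 0 := by
      have h2 : (τ q).natDegree = d + k.natDegree := by
        rw [hk, natDegree_mul hq0 hk0]
      omega
    obtain ⟨ck, hck⟩ := natDegree_eq_zero.mp hkdeg
    rw [← hck] at hk
    have hck_val : ck = α ^ d := by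
      have h2 := congrArg (fun f => Polynomial.coeff f d) hk
      simp only [hcoeff, coeff_mul_C] at h2
      rw [hqmon.coeff_natDegree] at h2
      simpa using h2.symm
    rw [hck_val] at hk
    have hτp : τ p = p * C (α ^ d) := by
      apply mul_right_cancel₀ hq0
      rw [key, hk]; ring
    have hqc : ∀ n, σ₀ (q.coeff n) * α ^ n = q.coeff n * α ^ d := by
      intro n
      have h2 := congrArg (fun f => Polynomial.coeff f n) hk
      simp only [hcoeff, coeff_mul_C] at h2
      exact h2
    have hpc : ∀ n, σ₀ (p.coeff n) * α ^ n = p.coeff n * α ^ d := by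
      intro n
      have h2 := congrArg (fun f => Polynomial.coeff f n) hτp
      simp only [hcoeff, coeff_mul_C] at h2
      exact h2
    have claim : ∀ (x : F) (n : ℕ), x ≠ 0 → σ₀ x * α ^ n = x * α ^ d → n = d := by
      intro x n hx hxe
      by_contra hnd
      rcases Nat.lt_or_ge n d with hlt | hge
      · refine hno ⟨x, d - n, hx, by omega, ?_⟩
        apply mul_right_cancel₀ (pow_ne_zero n hα)
        have hsplit : α ^ d = α ^ (d - n) * α ^ n := by
          rw [← pow_add]; congr 1; omega
        rw [hxe, hsplit]; ring
      · have hgt : d < n := lt_of_le_of_ne hge (fun h2 => hnd h2.symm)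
        refine hno ⟨x⁻¹, n - d, inv_ne_zero hx, by omega, ?_⟩
        have hxx : σ₀ x * α ^ (n - d) = x := by
          apply mul_right_cancel₀ (pow_ne_zero d hα)
          rw [mul_assoc, ← pow_add, show n - d + d = n from by omega, hxe]
        have h4 : σ₀ x = x / α ^ (n - d) := (eq_div_iff (pow_ne_zero _ hα)).mpr hxx
        rw [map_inv₀, h4, inv_div, div_eq_mul_inv]
    have hq_shape : ∀ n, n ≠ d → q.coeff n = 0 := by
      intro n hn
      by_contra hx
      exact hn (claim _ n hx (hqc n))
    have hp_shape : ∀ n, n ≠ d → p.coeff n = 0 := by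
      intro n hn
      by_contra hx
      exact hn (claim _ n hx (hpc n))
    have hc0 : σ₀ (p.coeff d) = p.coeff d :=
      mul_right_cancel₀ (pow_ne_zero d hα) (hpc d)
    have hq_eq : q = X ^ d := by
      ext n
      rcases eq_or_ne n d with rfl | hn
      · rw [coeff_X_pow, if_pos rfl, hqmon.coeff_natDegree]
      · rw [hq_shape n hn, coeff_X_pow, if_neg hn]
    have hp_eq : p = C (p.coeff d) * X ^ d := by
      ext n
      rcases eq_or_ne n d with rfl | hn
      · simp [coeff_X_pow]
      · simp [hp_shape n hn, coeff_X_pow, hn]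
    refine ⟨p.coeff d, hc0, ?_⟩
    rw [← RatFunc.num_div_denom r, ← hp, ← hq, hp_eq, hq_eq, map_mul, map_pow,
      RatFunc.algebraMap_C, RatFunc.algebraMap_X, mul_div_assoc,
      div_self (pow_ne_zero d RatFunc.X_ne_zero), mul_one]
    simp [coeff_C_mul, coeff_X_pow]
end

section
/- Let (A, σ) be a difference ring and let G be a subgroup of the unit group Aˣ such that every nonzero element c ∈ A satisfying σ(c) = u·c for some u ∈ G is a unit of A. Let σ' be the ring automorphism of the Laurent polynomial ring A[t,t⁻¹] with σ'|_A = σ and σ'(t) = α·t for some α ∈ G, and assume this is a Π-extension, i.e., const(A[t,t⁻¹], σ') = const(A, σ). Then sconst_G(A[t,t⁻¹], σ') = {h·t^m : h ∈ sconst_G(A,σ), m ∈ ℤ}, i.e., a Laurent polynomial p satisfies σ'(p) = u·p for some u ∈ G exactly when p = h·t^m with σ(h) = v·h for some v ∈ G and m ∈ ℤ; moreover every nonzero such p is a unit of A[t,t⁻¹]. -/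
open LaurentPolynomial

private lemma sigma_T {A : Type*} [CommRing A]
    (σ' : LaurentPolynomial A ≃+* LaurentPolynomial A) (α : Aˣ)
    (hT : σ' (T 1) = C (α : A) * T 1) :
    ∀ n : ℤ, σ' (T n : LaurentPolynomial A) = C ((α^n : Aˣ) : A) * T n := by
  have hneg : σ' (T (-1) : LaurentPolynomial A) = C ((α⁻¹ : Aˣ) : A) * T (-1) := by
    have h1 : (C ((α⁻¹:Aˣ):A) * T (-1)) * (C (α:A) * T 1) = (1 : LaurentPolynomial A) := by
      rw [mul_mul_mul_comm, ← map_mul, ← T_add]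
      simp
    calc σ' (T (-1)) = σ' (T (-1)) * ((C ((α⁻¹:Aˣ):A) * T (-1)) * (C (α:A) * T 1)) := by
          rw [h1, mul_one]
      _ = (C ((α⁻¹:Aˣ):A) * T (-1)) * (σ' (T (-1)) * σ' (T 1)) := by ring_nf; rw [hT]; ring
      _ = (C ((α⁻¹:Aˣ):A) * T (-1)) * σ' (T (-1) * T 1) := by rw [map_mul]
      _ = C ((α⁻¹:Aˣ):A) * T (-1) := by rw [← T_add]; simp
  intro n
  induction n using Int.induction_on with
  | zero => simp
  | succ k ih =>
      rw [T_add, map_mul, ih, hT, zpow_add, zpow_one, Units.val_mul, map_mul C]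
      ring
  | pred k ih =>
      have : (-(k:ℤ) - 1) = (-(k:ℤ)) + (-1) := by ring
      rw [this, T_add, map_mul, ih, hneg, zpow_add, zpow_neg_one, Units.val_mul, map_mul C]
      ring

private lemma sigma_coeff {A : Type*} [CommRing A] (σ : A ≃+* A)
    (σ' : LaurentPolynomial A ≃+* LaurentPolynomial A) (α : Aˣ)
    (hC : ∀ a : A, σ' (C a) = C (σ a))
    (hTn : ∀ n : ℤ, σ' (T n : LaurentPolynomial A) = C ((α^n : Aˣ) : A) * T n)
    (p : LaurentPolynomial A) (k : ℤ) :
    (σ' p).coeff k = σ (p.coeff k) * ((α^k : Aˣ) : A) := by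
  have hp : σ' p = p.coeff.sum fun n a => AddMonoidAlgebra.single n (σ a * ((α^n : Aˣ) : A)) := by
    conv_lhs => rw [← AddMonoidAlgebra.sum_coeff_single p]
    rw [map_finsuppSum]
    refine Finsupp.sum_congr fun n _ => ?_
    rw [single_eq_C_mul_T, map_mul, hC, hTn, single_eq_C_mul_T, map_mul C]
    ring
  rw [hp, AddMonoidAlgebra.coeff_finsuppSum, Finsupp.sum_apply, Finsupp.sum, Finset.sum_eq_single k]
  · exact Finsupp.single_eq_same
  · intro b _ hb; exact Finsupp.single_eq_of_ne hb.symm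
  · intro hk
    have : p.coeff k = 0 := Finsupp.notMem_support_iff.mp hk
    simp only [this, AddMonoidAlgebra.coeff_single, map_zero, zero_mul, Finsupp.single_zero, Finsupp.coe_zero, Pi.zero_apply]

private lemma C_mul_coeff {A : Type*} [CommRing A] (u : A) (p : LaurentPolynomial A) (k : ℤ) :
    (C u * p).coeff k = u * p.coeff k := by
  rw [← single_eq_C]
  exact AddMonoidAlgebra.coeff_single_zero_mul p u k

/-- Let `(A, σ)` be a difference ring and `G ≤ Aˣ` with every
nonzero semi-constant over `G` a unit.  Let `σ'` on `A[t,t⁻¹]` extend `σ` with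
`σ'(t) = α·t` for some `α ∈ G`, and assume it is a Π-extension.  Then
`sconst_G(A[t,t⁻¹], σ') = {h·t^m : h ∈ sconst_G(A,σ), m ∈ ℤ}`, and every nonzero
semi-constant over `G` in `A[t,t⁻¹]` is a unit. -/
theorem stmt_13 {A : Type*} [CommRing A] [CharZero A]
    (σ : A ≃+* A) (G : Subgroup Aˣ)
    (hG : ∀ c : A, c ≠ 0 → (∃ u ∈ G, σ c = (u : A) * c) → IsUnit c)
    (α : Aˣ) (hαG : α ∈ G)
    (σ' : LaurentPolynomial A ≃+* LaurentPolynomial A)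
    (hC : ∀ a : A, σ' (LaurentPolynomial.C a) = LaurentPolynomial.C (σ a))
    (hT : σ' (LaurentPolynomial.T 1) = LaurentPolynomial.C (α : A) * LaurentPolynomial.T 1)
    (hPi : ∀ p : LaurentPolynomial A, σ' p = p → ∃ c : A, σ c = c ∧ p = LaurentPolynomial.C c) :
    ∀ p : LaurentPolynomial A,
      ((∃ u ∈ G, σ' p = LaurentPolynomial.C (u : A) * p)
        ↔ ∃ (h : A) (m : ℤ), (∃ v ∈ G, σ h = (v : A) * h) ∧
            p = LaurentPolynomial.C h * LaurentPolynomial.T m)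
      ∧ (p ≠ 0 → (∃ u ∈ G, σ' p = LaurentPolynomial.C (u : A) * p) → IsUnit p) := by
  have hTn := sigma_T σ' α hT
  have hcoeff := sigma_coeff σ σ' α hC hTn
  intro p
  by_cases hp0 : p = 0
  · subst hp0
    refine ⟨⟨fun _ => ⟨0, 0, ⟨1, one_mem G, by simp⟩, by simp⟩, fun _ => ⟨1, one_mem G, by simp⟩⟩,
      fun h => absurd rfl h⟩
  -- main case : p ≠ 0
  have key : (∃ u ∈ G, σ' p = C (↑u : A) * p) →
      ∃ (h : A) (m : ℤ), (∃ v ∈ G, σ h = (v : A) * h) ∧ p = C h * T m ∧ IsUnit p := by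
    rintro ⟨u, huG, hu⟩
    obtain ⟨n, hn⟩ : ∃ n : ℤ, p.coeff n ≠ 0 := by
      by_contra hc
      push_neg at hc
      exact hp0 (LaurentPolynomial.ext fun a => hc a)
    have hrel : σ (p.coeff n) * ((α^n : Aˣ) : A) = (u : A) * p.coeff n := by
      rw [← hcoeff p n, hu, C_mul_coeff]
    have hσpn : σ (p.coeff n) = ((u * (α^n)⁻¹ : Aˣ) : A) * p.coeff n := by
      calc σ (p.coeff n) = σ (p.coeff n) * (((α^n : Aˣ) : A) * ((α^n)⁻¹ : Aˣ)) := by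
            rw [Units.mul_inv, mul_one]
        _ = (σ (p.coeff n) * ((α^n : Aˣ) : A)) * ((α^n)⁻¹ : Aˣ) := by ring
        _ = ((u : A) * p.coeff n) * ((α^n)⁻¹ : Aˣ) := by rw [hrel]
        _ = ((u * (α^n)⁻¹ : Aˣ) : A) * p.coeff n := by rw [Units.val_mul]; ring
    have hmemuα : u * (α^n)⁻¹ ∈ G := mul_mem huG (inv_mem (zpow_mem hαG n))
    obtain ⟨w, hwval⟩ : IsUnit (p.coeff n) := hG _ hn ⟨u * (α^n)⁻¹, hmemuα, hσpn⟩
    have hσw : σ ((w : A)) = ((u * (α^n)⁻¹ : Aˣ) : A) * (w : A) := by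
      rw [hwval]; exact hσpn
    have hσwinv_mul : σ ((w⁻¹ : Aˣ) : A) * σ ((w : A)) = 1 := by
      rw [← map_mul, Units.inv_mul, map_one]
    -- the candidate constant
    set r : LaurentPolynomial A := C ((w⁻¹ : Aˣ) : A) * T (-n) * p with hr_def
    have hscalar : σ ((w⁻¹ : Aˣ) : A) * ((α^(-n) : Aˣ) : A) * (u : A) = ((w⁻¹ : Aˣ) : A) := by
      have hwu : ∀ a b : A, a * (w : A) = b * (w : A) → a = b := by
        intro a b hab
        calc a = a * ((w : A) * ((w⁻¹ : Aˣ) : A)) := by rw [Units.mul_inv, mul_one]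
          _ = b * ((w : A) * ((w⁻¹ : Aˣ) : A)) := by rw [← mul_assoc, hab, mul_assoc]
          _ = b := by rw [Units.mul_inv, mul_one]
      apply hwu
      have hαneg : ((α^(-n) : Aˣ) : A) = (((α^n)⁻¹ : Aˣ) : A) := by rw [zpow_neg]
      calc σ ((w⁻¹ : Aˣ) : A) * ((α^(-n) : Aˣ) : A) * (u : A) * (w : A)
          = σ ((w⁻¹ : Aˣ) : A) * (((u * (α^n)⁻¹ : Aˣ) : A) * (w : A)) := by
            rw [hαneg, Units.val_mul]; ring
        _ = σ ((w⁻¹ : Aˣ) : A) * σ ((w : A)) := by rw [← hσw]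
        _ = 1 := hσwinv_mul
        _ = ((w⁻¹ : Aˣ) : A) * (w : A) := (Units.inv_mul w).symm
    have hrfix : σ' r = r := by
      rw [hr_def, map_mul, map_mul, hC, hTn, hu]
      calc C (σ ((w⁻¹ : Aˣ) : A)) * (C ((α^(-n) : Aˣ) : A) * T (-n)) * (C (u : A) * p)
          = C (σ ((w⁻¹ : Aˣ) : A) * ((α^(-n) : Aˣ) : A) * (u : A)) * T (-n) * p := by
            rw [map_mul C, map_mul C]; ring
        _ = C ((w⁻¹ : Aˣ) : A) * T (-n) * p := by rw [hscalar]
    obtain ⟨c, hσc, hrc⟩ := hPi r hrfix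
    have hpeq : p = C ((w : A) * c) * T n := by
      have h1 : C ((w : A)) * T n * r = p := by
        rw [hr_def, show C ((w : A)) * T n * (C ((w⁻¹ : Aˣ) : A) * T (-n) * p)
            = (C ((w : A)) * C ((w⁻¹ : Aˣ) : A)) * (T n * T (-n)) * p from by ring,
          ← map_mul C, Units.mul_inv, ← T_add, add_neg_cancel]
        simp
      rw [← h1, hrc, map_mul C]
      ring
    have hσh : σ ((w : A) * c) = ((u * (α^n)⁻¹ : Aˣ) : A) * ((w : A) * c) := by
      rw [map_mul, hσw, hσc]; ring
    have hcne : c ≠ 0 := by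
      intro h0
      apply hp0
      rw [hpeq, h0, mul_zero, map_zero, zero_mul]
    have hcu : IsUnit c := hG c hcne ⟨1, one_mem G, by simp [hσc]⟩
    refine ⟨(w : A) * c, n, ⟨u * (α^n)⁻¹, hmemuα, hσh⟩, hpeq, ?_⟩
    rw [hpeq]
    exact ((w.isUnit.mul hcu).map C).mul (isUnit_T n)
  refine ⟨⟨fun hx => ?_, ?_⟩, fun _ hx => ?_⟩
  · obtain ⟨h, m, hv, hpe, _⟩ := key hx
    exact ⟨h, m, hv, hpe⟩
  · rintro ⟨h, m, ⟨v, hvG, hσh⟩, hpe⟩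
    refine ⟨v * α ^ m, mul_mem hvG (zpow_mem hαG m), ?_⟩
    rw [hpe, map_mul, hC, hTn, hσh, Units.val_mul, map_mul C, map_mul C]
    ring
  · obtain ⟨_, _, _, _, hu⟩ := key hx
    exact hu
end

section
/- Let (A, σ) be a difference ring and let G be a subgroup of the unit group Aˣ such that every nonzero element c ∈ A satisfying σ(c) = u·c for some u ∈ G is a unit of A. Let σ' be the ring automorphism of A[t,t⁻¹] with σ'|_A = σ and σ'(t) = α·t for some α ∈ G, and assume this is a Π-extension (const(A[t,t⁻¹], σ') = const(A, σ)). Let G̃ = {h·t^m : h ∈ G, m ∈ ℤ}, a subgroup of A[t,t⁻¹]ˣ. Then sconst_{G̃}(A[t,t⁻¹], σ') = sconst_G(A[t,t⁻¹], σ') = {h·t^m : h ∈ sconst_G(A,σ), m ∈ ℤ}; that is, a Laurent polynomial p satisfies σ'(p) = w·p for some w ∈ G̃ if and only if p = h·t^m for some m ∈ ℤ and h ∈ A with σ(h) = v·h for some v ∈ G. -/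
open LaurentPolynomial in
private lemma CT_mul_CT {A : Type*} [CommRing A] (a b : A) (n m : ℤ) :
    (C a * T n) * (C b * T m) = C (a * b) * T (n + m) := by
  rw [T_add, map_mul]; ring

open LaurentPolynomial in
private lemma CT_apply {A : Type*} [CommRing A] (a : A) (k n : ℤ) :
    ((C a * T k : LaurentPolynomial A)).coeff n = if k = n then a else 0 := by
  rw [← single_eq_C_mul_T]; exact Finsupp.single_apply

open LaurentPolynomial in
private lemma CT_mul_apply {A : Type*} [CommRing A] (u : A) (m : ℤ)
    (p : LaurentPolynomial A) (n : ℤ) :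
    ((C u * T m * p : LaurentPolynomial A)).coeff n = u * p.coeff (n - m) := by
  rw [← single_eq_C_mul_T, AddMonoidAlgebra.coeff_single_mul_apply, neg_add_eq_sub]

private lemma grp_aux {G : Type*} [CommGroup G] (a b c : G) :
    (a * b⁻¹ * c)⁻¹ * b⁻¹ * a = c⁻¹ := by
  calc (a * b⁻¹ * c)⁻¹ * b⁻¹ * a = (a * b⁻¹ * c)⁻¹ * (a * b⁻¹) := by
        rw [mul_assoc, mul_comm b⁻¹ a]
    _ = c⁻¹ := by rw [mul_inv_rev, inv_mul_cancel_right]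

open LaurentPolynomial in
/-- Let `(A, σ)` be a difference ring and `G ≤ Aˣ` with every
nonzero semi-constant over `G` a unit.  Let `σ'` on `A[t,t⁻¹]` extend `σ` with
`σ'(t) = α·t` for some `α ∈ G`, and assume it is a Π-extension.  With
`G̃ = {h·t^m : h ∈ G, m ∈ ℤ}` one has
`sconst_{G̃}(A[t,t⁻¹], σ') = sconst_G(A[t,t⁻¹], σ') = {h·t^m : h ∈ sconst_G(A,σ), m ∈ ℤ}`. -/
theorem stmt_14 {A : Type*} [CommRing A] [CharZero A]
    (σ : A ≃+* A) (G : Subgroup Aˣ)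
    (hG : ∀ c : A, c ≠ 0 → (∃ u ∈ G, σ c = (u : A) * c) → IsUnit c)
    (α : Aˣ) (hαG : α ∈ G)
    (σ' : LaurentPolynomial A ≃+* LaurentPolynomial A)
    (hC : ∀ a : A, σ' (LaurentPolynomial.C a) = LaurentPolynomial.C (σ a))
    (hT : σ' (LaurentPolynomial.T 1) = LaurentPolynomial.C (α : A) * LaurentPolynomial.T 1)
    (hPi : ∀ p : LaurentPolynomial A, σ' p = p → ∃ c : A, σ c = c ∧ p = LaurentPolynomial.C c) :
    ∀ p : LaurentPolynomial A,
      ((∃ (h : Aˣ) (m : ℤ), h ∈ G ∧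
          σ' p = LaurentPolynomial.C (h : A) * LaurentPolynomial.T m * p)
        ↔ (∃ u ∈ G, σ' p = LaurentPolynomial.C (u : A) * p))
      ∧ ((∃ (h : Aˣ) (m : ℤ), h ∈ G ∧
          σ' p = LaurentPolynomial.C (h : A) * LaurentPolynomial.T m * p)
        ↔ ∃ (h : A) (m : ℤ), (∃ v ∈ G, σ h = (v : A) * h) ∧
            p = LaurentPolynomial.C h * LaurentPolynomial.T m) := by
  classical
  -- action of σ' on the monomials T n
  have hTn : ∀ n : ℤ, σ' (T n) = C ((α ^ n : Aˣ) : A) * T n := by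
    have hnat : ∀ n : ℕ, σ' (T (n : ℤ)) = C ((α ^ (n : ℤ) : Aˣ) : A) * T (n : ℤ) := by
      intro n
      have h1 : (T (n : ℤ) : LaurentPolynomial A) = T 1 ^ n := by
        rw [T_pow, mul_one]
      rw [h1, map_pow, hT, mul_pow, T_pow, mul_one, ← map_pow]
      norm_num [zpow_natCast, Units.val_pow_eq_pow_val]
    intro n
    rcases le_or_gt 0 n with hn | hn
    · obtain ⟨k, rfl⟩ := Int.eq_ofNat_of_zero_le hn
      exact hnat k
    · obtain ⟨k, hk⟩ : ∃ k : ℕ, -n = (k : ℤ) := Int.eq_ofNat_of_zero_le (by omega)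
      have h2 : σ' (T (-n)) = C ((α ^ (-n) : Aˣ) : A) * T (-n) := by rw [hk]; exact hnat k
      have h3 : σ' (T n) * σ' (T (-n)) = 1 := by
        rw [← map_mul, ← T_add, add_neg_cancel, T_zero, map_one]
      have h4 : (C ((α ^ n : Aˣ) : A) * T n) * σ' (T (-n)) = 1 := by
        rw [h2, CT_mul_CT, add_neg_cancel, ← Units.val_mul, ← zpow_add, add_neg_cancel,
          zpow_zero, Units.val_one, map_one, one_mul, T_zero]
      calc σ' (T n) = σ' (T n) * ((C ((α ^ n : Aˣ) : A) * T n) * σ' (T (-n))) := by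
            rw [h4, mul_one]
        _ = (C ((α ^ n : Aˣ) : A) * T n) * (σ' (T n) * σ' (T (-n))) := by ring
        _ = _ := by rw [h3, mul_one]
  -- coefficientwise description of σ'
  have hcoeff : ∀ (p : LaurentPolynomial A) (n : ℤ),
      (σ' p).coeff n = σ (p.coeff n) * ((α ^ n : Aˣ) : A) := by
    intro p
    induction p using LaurentPolynomial.induction_on' with
    | add f g hf hg =>
      intro n
      rw [map_add, AddMonoidAlgebra.coeff_add, Finsupp.add_apply, AddMonoidAlgebra.coeff_add, Finsupp.add_apply, hf, hg, map_add, add_mul]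
    | C_mul_T k a =>
      intro n
      have h1 : σ' (C a * T k) = C (σ a * ((α ^ k : Aˣ) : A)) * T k := by
        rw [map_mul, hC, hTn, map_mul]; ring
      rw [h1, CT_apply, CT_apply]
      split_ifs with h
      · subst h; rfl
      · simp
  -- the exponent in a semi-invariance equation is forced to be 0
  have key : ∀ (p : LaurentPolynomial A) (u : Aˣ) (m : ℤ), u ∈ G →
      σ' p = C (u : A) * T m * p → p ≠ 0 → m = 0 := by
    intro p u m _ Heq hp0
    have hco : ∀ n : ℤ, σ (p.coeff n) * ((α ^ n : Aˣ) : A) = (u : A) * p.coeff (n - m) := by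
      intro n
      have h1 : (σ' p).coeff n = ((C (u : A) * T m * p : LaurentPolynomial A)).coeff n := by
        rw [Heq]
      rw [hcoeff, CT_mul_apply] at h1
      exact h1
    have hsupp : p.coeff.support.Nonempty := Finsupp.support_nonempty_iff.mpr (fun h => hp0 (AddMonoidAlgebra.coeff_eq_zero.mp h))
    rcases lt_trichotomy m 0 with h | h | h
    · set N := p.coeff.support.min' hsupp with hN
      have hpN : p.coeff N ≠ 0 := Finsupp.mem_support_iff.mp (p.coeff.support.min'_mem hsupp)
      have hout : p.coeff (N + m) = 0 := by
        by_contra hc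
        have := p.coeff.support.min'_le (N + m) (Finsupp.mem_support_iff.mpr hc)
        omega
      have h2 := hco (N + m)
      rw [hout, add_sub_cancel_right, map_zero, zero_mul] at h2
      exact absurd ((Units.mul_right_eq_zero u).mp h2.symm) hpN
    · exact h
    · set N := p.coeff.support.max' hsupp with hN
      have hpN : p.coeff N ≠ 0 := Finsupp.mem_support_iff.mp (p.coeff.support.max'_mem hsupp)
      have hout : p.coeff (N + m) = 0 := by
        by_contra hc
        have := p.coeff.support.le_max' (N + m) (Finsupp.mem_support_iff.mpr hc)
        omega
      have h2 := hco (N + m)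
      rw [hout, add_sub_cancel_right, map_zero, zero_mul] at h2
      exact absurd ((Units.mul_right_eq_zero u).mp h2.symm) hpN
  -- structure of semi-constants over G (with exponent 0)
  have struct : ∀ (p : LaurentPolynomial A) (u : Aˣ), u ∈ G →
      σ' p = C (u : A) * p → p ≠ 0 →
      ∃ (h : A) (m : ℤ), (∃ v ∈ G, σ h = (v : A) * h) ∧ p = C h * T m := by
    intro p u hu Heq hp0
    have hco : ∀ n : ℤ, σ (p.coeff n) * ((α ^ n : Aˣ) : A) = (u : A) * p.coeff n := by
      intro n
      have h1 : (σ' p).coeff n = ((C (u : A) * T 0 * p : LaurentPolynomial A)).coeff n := by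
        rw [T_zero, mul_one, Heq]
      rw [hcoeff, CT_mul_apply, sub_zero] at h1
      exact h1
    have hsupp : p.coeff.support.Nonempty := Finsupp.support_nonempty_iff.mpr (fun h => hp0 (AddMonoidAlgebra.coeff_eq_zero.mp h))
    set N := p.coeff.support.max' hsupp with hNdef
    have hpN : p.coeff N ≠ 0 := Finsupp.mem_support_iff.mp (p.coeff.support.max'_mem hsupp)
    set v : Aˣ := u * (α ^ N)⁻¹ with hv
    have hvG : v ∈ G := mul_mem hu (inv_mem (zpow_mem hαG N))
    have hσa : σ (p.coeff N) = (v : A) * p.coeff N := by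
      have h2 : ((α ^ N : Aˣ) : A) * (((α ^ N : Aˣ)⁻¹ : Aˣ) : A) = 1 := Units.mul_inv _
      calc σ (p.coeff N) = σ (p.coeff N) * ((α ^ N : Aˣ) : A) * (((α ^ N : Aˣ)⁻¹ : Aˣ) : A) := by
            rw [mul_assoc, h2, mul_one]
        _ = (u : A) * p.coeff N * (((α ^ N : Aˣ)⁻¹ : Aˣ) : A) := by rw [hco N]
        _ = (v : A) * p.coeff N := by rw [hv, Units.val_mul]; ring
    obtain ⟨ua, hua⟩ := hG _ hpN ⟨v, hvG, hσa⟩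
    have hσua : σ ((ua : A)) = ((v * ua : Aˣ) : A) := by
      rw [Units.val_mul, hua]; exact hσa
    have hσinv : σ ((ua⁻¹ : Aˣ) : A) = (((v * ua)⁻¹ : Aˣ) : A) := by
      have e1 : σ ((ua⁻¹ : Aˣ) : A) * ((v * ua : Aˣ) : A) = 1 := by
        rw [← hσua, ← map_mul, ← Units.val_mul, inv_mul_cancel, Units.val_one, map_one]
      exact (Units.inv_eq_of_mul_eq_one_left e1).symm
    set r : LaurentPolynomial A := C ((ua⁻¹ : Aˣ) : A) * T (-N) * p with hr
    have hσr : σ' r = r := by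
      have expand : σ' r =
          C (σ ((ua⁻¹ : Aˣ) : A) * ((α ^ (-N) : Aˣ) : A) * (u : A)) * T (-N) * p := by
        rw [hr, map_mul, map_mul, hC, hTn, Heq, map_mul, map_mul]; ring
      have huid : (v * ua)⁻¹ * α ^ (-N) * u = ua⁻¹ := by
        rw [hv, zpow_neg]; exact grp_aux u (α ^ N) ua
      rw [expand, hσinv, ← Units.val_mul, ← Units.val_mul, huid, hr]
    obtain ⟨c, hc, hrc⟩ := hPi r hσr
    refine ⟨(ua : A) * c, N, ⟨v, hvG, ?_⟩, ?_⟩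
    · rw [map_mul, hσua, hc, Units.val_mul, mul_assoc]
    · have h5 : C ((ua : A)) * T N * r = p := by
        rw [hr, show C ((ua : A)) * T N * (C ((ua⁻¹ : Aˣ) : A) * T (-N) * p)
            = C ((ua : A) * ((ua⁻¹ : Aˣ) : A)) * T (N + -N) * p by
          rw [map_mul, T_add]; ring]
        rw [← Units.val_mul, mul_inv_cancel, Units.val_one, map_one, add_neg_cancel,
          T_zero, one_mul, one_mul]
      rw [← h5, hrc, map_mul]; ring
  intro p
  by_cases hp0 : p = 0
  · subst hp0
    refine ⟨⟨?_, ?_⟩, ⟨?_, ?_⟩⟩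
    · rintro ⟨h, m, hh, -⟩; exact ⟨h, hh, by simp⟩
    · rintro ⟨u, hu, -⟩; exact ⟨u, 0, hu, by simp⟩
    · rintro -
      exact ⟨0, 0, ⟨1, one_mem G, by simp⟩, by simp⟩
    · rintro -
      exact ⟨α, 0, hαG, by simp⟩
  · refine ⟨⟨?_, ?_⟩, ⟨?_, ?_⟩⟩
    · rintro ⟨h, m, hh, Heq⟩
      have hm := key p h m hh Heq hp0
      subst hm
      exact ⟨h, hh, by simpa [LaurentPolynomial.T_zero] using Heq⟩
    · rintro ⟨u, hu, Heq⟩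
      exact ⟨u, 0, hu, by simpa [LaurentPolynomial.T_zero] using Heq⟩
    · rintro ⟨h, m, hh, Heq⟩
      have hm := key p h m hh Heq hp0
      subst hm
      exact struct p h hh (by simpa [LaurentPolynomial.T_zero] using Heq) hp0
    · rintro ⟨h, m, ⟨v, hv, hσh⟩, rfl⟩
      refine ⟨v * α ^ m, 0, mul_mem hv (zpow_mem hαG m), ?_⟩
      rw [map_mul, hC, hσh, hTn]
      simp only [map_mul, Units.val_mul, LaurentPolynomial.T_zero, mul_one]
      ring
end

section
/- Let (A, σ) be a difference ring and let G be a subgroup of the unit group Aˣ such that every nonzero element c ∈ A satisfying σ(c) = u·c for some u ∈ G is a unit of A. Let E = A[y]/⟨y^λ − 1⟩ (λ > 1) be an R-extension of (A, σ) of order λ, with x the image of y, α = σ(x)/x ∈ G a primitive λ-th root of unity, and const(E, σ) = const(A, σ). Then sconst_G(E, σ) = {h·x^m : h ∈ sconst_G(A,σ), 0 ≤ m < λ}: an element p ∈ E satisfies σ(p) = u·p for some u ∈ G exactly when p = h·x^m with σ(h) = v·h for some v ∈ G and 0 ≤ m < λ; moreover every nonzero such p is a unit of E. -/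
open Polynomial

set_option maxHeartbeats 1000000


/-- Let `(A, σ)` be a difference ring and `G ≤ Aˣ` with every
nonzero semi-constant over `G` a unit.  Let `E = A[y]/⟨y^λ − 1⟩` (`λ > 1`) be an
R-extension of `(A, σ)` of order `λ`: `x` the image of `y`, `σ(x) = α·x` with
`α ∈ G` a primitive `λ`-th root of unity, and `const(E, σ) = const(A, σ)`.  Then
`sconst_G(E, σ) = {h·x^m : h ∈ sconst_G(A,σ), 0 ≤ m < λ}`, and every nonzero
semi-constant over `G` in `E` is a unit. -/
theorem stmt_15 {A : Type*} [CommRing A] [CharZero A]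
    (σ : A ≃+* A) (G : Subgroup Aˣ)
    (hG : ∀ c : A, c ≠ 0 → (∃ u ∈ G, σ c = (u : A) * c) → IsUnit c)
    (lam : ℕ) (hlam : 1 < lam)
    (α : Aˣ) (hαG : α ∈ G) (hα : (α : A) ^ lam = 1)
    (hprim : ∀ n : ℕ, 0 < n → (α : A) ^ n = 1 → lam ≤ n)
    (I : Ideal (Polynomial A))
    (hI : I = Ideal.span {(Polynomial.X : Polynomial A) ^ lam - 1})
    (σ'' : (Polynomial A ⧸ I) ≃+* (Polynomial A ⧸ I))
    (hC : ∀ a : A, σ'' (Ideal.Quotient.mk I (Polynomial.C a))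
        = Ideal.Quotient.mk I (Polynomial.C (σ a)))
    (hX : σ'' (Ideal.Quotient.mk I Polynomial.X)
        = Ideal.Quotient.mk I (Polynomial.C (α : A)) * Ideal.Quotient.mk I Polynomial.X)
    (hconst : ∀ p : Polynomial A ⧸ I, σ'' p = p →
        ∃ c : A, σ c = c ∧ p = Ideal.Quotient.mk I (Polynomial.C c)) :
    ∀ p : Polynomial A ⧸ I,
      ((∃ u ∈ G, σ'' p = Ideal.Quotient.mk I (Polynomial.C ((u : Aˣ) : A)) * p)
        ↔ ∃ (h : A) (m : ℕ), m < lam ∧ (∃ v ∈ G, σ h = (v : A) * h) ∧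
            p = Ideal.Quotient.mk I (Polynomial.C h) * (Ideal.Quotient.mk I Polynomial.X) ^ m)
      ∧ (p ≠ 0 → (∃ u ∈ G, σ'' p = Ideal.Quotient.mk I (Polynomial.C ((u : Aˣ) : A)) * p)
          → IsUnit p) := by
  subst hI
  set mk := Ideal.Quotient.mk (Ideal.span {(X : A[X]) ^ lam - 1}) with hmk
  -- basic setup
  have hmon : (X ^ lam - 1 : A[X]).Monic := by
    have := monic_X_pow_sub_C (1:A) (by omega : lam ≠ 0)
    simpa using this
  let pb : PowerBasis A (A[X] ⧸ Ideal.span {(X:A[X])^lam - 1}) := AdjoinRoot.powerBasis' hmon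
  have hdim : pb.dim = lam := by
    show (AdjoinRoot.powerBasis' hmon).dim = lam
    rw [AdjoinRoot.powerBasis'_dim]
    have h1 : (X ^ lam - 1 : A[X]) = X ^ lam - C 1 := by simp
    rw [h1, natDegree_X_pow_sub_C]
  have hgen : pb.gen = mk (X : A[X]) := rfl
  have hsmul : ∀ (r : A) (z : A[X] ⧸ Ideal.span {(X:A[X])^lam - 1}),
      r • z = mk (C r) * z := fun r z => Algebra.smul_def r z
  let b : Module.Basis (Fin lam) A (A[X] ⧸ Ideal.span {(X:A[X])^lam - 1}) :=
    pb.basis.reindex (finCongr hdim)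
  have hb : ∀ i : Fin lam, b i = (mk (X : A[X])) ^ (i : ℕ) := by
    intro i
    show pb.basis.reindex (finCongr hdim) i = _
    rw [Module.Basis.reindex_apply, pb.basis_eq_pow, hgen]
    norm_num
  have hrepr : ∀ c : Fin lam → A, b.equivFun (∑ i, c i • b i) = c := by
    intro c
    rw [← b.equivFun_symm_apply]
    exact b.equivFun.apply_symm_apply c
  -- x is a unit
  have hxlam : (mk (X : A[X])) ^ lam = 1 := by
    rw [← map_pow, ← map_one mk]
    rw [hmk, Ideal.Quotient.mk_eq_mk_iff_sub_mem]
    exact Ideal.subset_span rfl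
  have hxunit : IsUnit (mk (X : A[X])) := by
    apply IsUnit.of_mul_eq_one ((mk X) ^ (lam - 1))
    rw [← pow_succ']
    have : lam - 1 + 1 = lam := by omega
    rw [this, hxlam]
  -- key expansion of σ'' on basis expansion
  have hL1 : ∀ c : Fin lam → A,
      σ'' (∑ i, c i • b i) = ∑ i, (σ (c i) * (α : A) ^ (i : ℕ)) • b i := by
    intro c
    rw [map_sum]
    refine Finset.sum_congr rfl fun i _ => ?_
    rw [hsmul, hb, hsmul, map_mul, map_pow, hC, hX, mul_pow, ← map_pow mk, ← C_pow,
      ← mul_assoc, ← map_mul mk, ← C_mul]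
  -- per-element work
  intro p
  set a : Fin lam → A := b.equivFun p with ha
  have hp : p = ∑ i, a i • b i := by
    rw [ha]
    exact (b.sum_equivFun p).symm
  have hfwd : (∃ u ∈ G, σ'' p = mk (C ((u : Aˣ) : A)) * p) →
      ∃ (h : A) (m : ℕ), m < lam ∧ (∃ v ∈ G, σ h = (v : A) * h) ∧
        p = mk (C h) * (mk X) ^ m := by
    rintro ⟨u, huG, hcond⟩
    have hcoef : ∀ i : Fin lam, σ (a i) * (α : A) ^ (i : ℕ) = (u : A) * a i := by
      have h1 : b.equivFun (σ'' p) = fun i => σ (a i) * (α : A) ^ (i : ℕ) := by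
        conv_lhs => rw [hp]
        rw [hL1, hrepr]
      have h2 : b.equivFun (mk (C ((u : Aˣ) : A)) * p) = fun i => (u : A) * a i := by
        rw [← hsmul, map_smul]
        funext i
        simp [ha]
      intro i
      exact congrFun (h1.symm.trans ((congrArg b.equivFun hcond).trans h2)) i
    have hsemi : ∀ k : Fin lam, σ (a k) = ((u * (α ^ (k : ℕ))⁻¹ : Aˣ) : A) * a k := by
      intro k
      have hw2 : (((α ^ (k : ℕ))⁻¹ : Aˣ) : A) * ((α : A) ^ (k : ℕ)) = 1 := by
        rw [← Units.val_pow_eq_pow_val, ← Units.val_mul, inv_mul_cancel, Units.val_one]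
      refine IsUnit.mul_right_cancel (α.isUnit.pow (k : ℕ)) ?_
      rw [Units.val_mul]
      linear_combination hcoef k - ((u : A) * a k) * hw2
    by_cases hp0 : p = 0
    · exact ⟨0, 0, by omega, ⟨1, one_mem G, by simp⟩, by simp [hp0]⟩
    have ha0 : a ≠ 0 := by
      intro h0
      apply hp0
      rw [hp]
      simp [h0]
    obtain ⟨i0, hi0⟩ : ∃ i, a i ≠ 0 := by
      by_contra hcon
      push_neg at hcon
      exact ha0 (funext hcon)
    have hpair : ∀ i j : Fin lam, (i : ℕ) < (j : ℕ) → a i ≠ 0 → a j ≠ 0 → False := by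
      intro i j hij hai haj
      obtain ⟨aj, haj'⟩ := hG _ haj ⟨_, mul_mem huG (inv_mem (pow_mem hαG (j:ℕ))), hsemi j⟩
      set n : ℕ := (j : ℕ) - (i : ℕ) with hn'
      have hn : n + (i : ℕ) = (j : ℕ) := by omega
      have hn0 : 0 < n := by omega
      have hnl : n < lam := by have := j.isLt; omega
      set m : ℕ := lam - n with hm'
      have hm0 : 0 < m := by omega
      have hml : m < lam := by omega
      set c : A := ((aj⁻¹ : Aˣ) : A) * a i with hc
      have e1 := hcoef i
      have e2 := hcoef j
      rw [← haj'] at e2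
      have hinv : σ ((aj : Aˣ) : A) * σ ((aj⁻¹ : Aˣ) : A) = 1 := by
        rw [← map_mul]
        simp
      have hji : ((aj⁻¹ : Aˣ) : A) * ((aj : Aˣ) : A) = 1 := by simp
      have hpow : (α : A) ^ n * (α : A) ^ (i : ℕ) = (α : A) ^ (j : ℕ) := by
        rw [← pow_add, hn]
      have key : σ c = (α : A) ^ n * c := by
        have hTP : IsUnit (σ ((aj : Aˣ) : A) * (α : A) ^ (i : ℕ)) :=
          (aj.isUnit.map σ).mul (α.isUnit.pow _)
        refine IsUnit.mul_right_cancel hTP ?_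
        rw [hc, map_mul]
        linear_combination (σ (((aj⁻¹ : Aˣ) : A)) * σ ((aj : Aˣ) : A)) * e1
          + ((u : A) * a i) * hinv
          - (a i * ((aj⁻¹ : Aˣ) : A) * σ ((aj : Aˣ) : A)) * hpow
          - (a i * ((aj⁻¹ : Aˣ) : A)) * e2
          - ((u : A) * a i) * hji
      set q := mk (C c) * (mk X) ^ m with hq'
      have hcc : σ c * (α : A) ^ m = c := by
        rw [key]
        have h5 : (α : A) ^ n * c * (α : A) ^ m = c * (α : A) ^ (n + m) := by
          rw [pow_add]
          ring
        rw [h5]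
        have hnm : n + m = lam := by omega
        rw [hnm, hα, mul_one]
      have hq : σ'' q = q := by
        rw [hq', map_mul, map_pow, hC, hX, mul_pow, ← map_pow mk, ← C_pow,
          ← mul_assoc, ← map_mul mk, ← C_mul, hcc]
      obtain ⟨d, hd, hqd⟩ := hconst q hq
      have hcz : c = 0 := by
        set im : Fin lam := ⟨m, hml⟩ with him
        set iz : Fin lam := ⟨0, by omega⟩ with hiz
        have hq1 : q = c • b im := by
          rw [hsmul, hb im, hq']
        have hq2 : mk (C d) = d • b iz := by
          rw [hsmul, hb iz, hiz]
          simp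
        have h3 := congrArg b.equivFun (hq1.symm.trans (hqd.trans hq2))
        have h4 := congrFun h3 im
        have hne : iz ≠ im := by
          simp only [hiz, him, ne_eq, Fin.mk.injEq]
          omega
        simpa [map_smul, Module.Basis.equivFun_self, hne] using h4
      apply hai
      have h6 := congrArg (fun t => ((aj : Aˣ) : A) * t) hcz
      simpa [hc, ← mul_assoc, Units.mul_inv_cancel_left] using h6
    have hzero : ∀ j, j ≠ i0 → a j = 0 := by
      intro j hj
      by_contra hjne
      have hne : (j : ℕ) ≠ (i0 : ℕ) := fun h => hj (Fin.ext h)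
      rcases hne.lt_or_gt with h | h
      · exact hpair j i0 h hjne hi0
      · exact hpair i0 j h hi0 hjne
    have hp1 : p = a i0 • b i0 := by
      rw [hp]
      exact Finset.sum_eq_single i0 (fun j _ hj => by rw [hzero j hj, zero_smul])
        (fun h => absurd (Finset.mem_univ i0) h)
    exact ⟨a i0, (i0 : ℕ), i0.isLt,
      ⟨u * (α ^ (i0 : ℕ))⁻¹, mul_mem huG (inv_mem (pow_mem hαG _)), hsemi i0⟩,
      by rw [hp1, hsmul, hb]⟩
  have hbwd : (∃ (h : A) (m : ℕ), m < lam ∧ (∃ v ∈ G, σ h = (v : A) * h) ∧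
      p = mk (C h) * (mk X) ^ m) →
      ∃ u ∈ G, σ'' p = mk (C ((u : Aˣ) : A)) * p := by
    rintro ⟨h, m, hmlt, ⟨v, hvG, hv⟩, hpe⟩
    refine ⟨v * α ^ m, mul_mem hvG (pow_mem hαG m), ?_⟩
    rw [hpe, map_mul, map_pow, hC, hX, mul_pow, ← map_pow mk, ← C_pow, hv]
    rw [← mul_assoc, ← map_mul mk, ← C_mul, ← mul_assoc, ← map_mul mk, ← C_mul]
    have hval : ((v * α ^ m : Aˣ) : A) = (v : A) * (α : A) ^ m := by
      simp [Units.val_pow_eq_pow_val]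
    rw [hval]
    have : (v : A) * h * (α : A) ^ m = (v : A) * (α : A) ^ m * h := by ring
    rw [this]
  refine ⟨⟨hfwd, hbwd⟩, ?_⟩
  intro hp0 hcond
  obtain ⟨h, m, hmlt, ⟨v, hvG, hv⟩, hpe⟩ := hfwd hcond
  have hh0 : h ≠ 0 := by
    rintro rfl
    apply hp0
    simp [hpe]
  have hhu : IsUnit h := hG h hh0 ⟨v, hvG, hv⟩
  have hmkc : IsUnit (mk (C h)) := hhu.map (mk.comp (C : A →+* A[X]))
  rw [hpe]
  exact hmkc.mul (hxunit.pow m)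
end

section
/- Let (A, σ) be a difference ring and let G be a subgroup of the unit group Aˣ such that every nonzero element c ∈ A satisfying σ(c) = u·c for some u ∈ G is a unit of A. Let σ' be the ring automorphism of A[t] with σ'|_A = σ and σ'(t) = t + β for some β ∈ A, and assume this is a Σ-extension (const(A[t], σ') = const(A, σ)). Let f ∈ A[t] and u ∈ G. Then every solution g ∈ A[t] of σ'(g) − u·g = f satisfies deg(g) ≤ max(deg(f) + 1, 0). -/
open Polynomial

lemma hasse_top {A : Type*} [CommRing A] (p : Polynomial A) :
    hasseDeriv p.natDegree p = C (p.coeff p.natDegree) := by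
  ext k
  rcases k with _ | k
  · simp [hasseDeriv_coeff, Nat.choose_self]
  · rw [hasseDeriv_coeff]
    have h1 : p.coeff (k + 1 + p.natDegree) = 0 :=
      p.coeff_eq_zero_of_natDegree_lt (by omega)
    simp [h1]

lemma hasse_sub_one {A : Type*} [CommRing A] (p : Polynomial A) {n : ℕ}
    (hn : 1 ≤ n) (hd : p.natDegree ≤ n) :
    hasseDeriv (n - 1) p = C (p.coeff (n - 1)) + C ((n : A) * p.coeff n) * X := by
  ext k
  rcases k with _ | k
  · simp [hasseDeriv_coeff]
  · rcases k with _ | k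
    · rw [hasseDeriv_coeff]
      have h1 : 1 + (n - 1) = n := by omega
      have h2 : n.choose (n - 1) = n := by
        have := Nat.choose_symm (n := n) (k := 1) hn
        rw [this, Nat.choose_one_right]
      simp [h1, h2]
    · rw [hasseDeriv_coeff]
      have h1 : p.coeff (k + 1 + 1 + (n - 1)) = 0 :=
        p.coeff_eq_zero_of_natDegree_lt (by omega)
      simp [h1, coeff_X]

/-- Let `(A, σ)` be a difference ring and `G ≤ Aˣ` with every
nonzero semi-constant over `G` a unit.  Let `σ'` on `A[t]` extend `σ` with
`σ'(t) = t + β` and be a Σ-extension.  For `f ∈ A[t]` and `u ∈ G`, every solution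
`g ∈ A[t]` of `σ'(g) − u·g = f` satisfies `deg(g) ≤ max(deg(f) + 1, 0)`. -/
theorem stmt_19 {A : Type*} [CommRing A] [CharZero A]
    (σ : A ≃+* A) (G : Subgroup Aˣ)
    (hG : ∀ c : A, c ≠ 0 → (∃ u ∈ G, σ c = (u : A) * c) → IsUnit c)
    (β : A)
    (σ' : Polynomial A ≃+* Polynomial A)
    (hC : ∀ a : A, σ' (Polynomial.C a) = Polynomial.C (σ a))
    (hX : σ' Polynomial.X = Polynomial.X + Polynomial.C β)
    (hSigma : ∀ p : Polynomial A, σ' p = p → ∃ c : A, σ c = c ∧ p = Polynomial.C c)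
    (f : Polynomial A) (u : Aˣ) (hu : u ∈ G) :
    ∀ g : Polynomial A, σ' g - Polynomial.C (u : A) * g = f →
      g.degree ≤ max (f.degree + 1) 0 := by
  intro g heq
  by_contra hdeg
  push_neg at hdeg
  -- hdeg : max (f.degree + 1) 0 < g.degree
  have hg0 : g ≠ 0 := by
    intro h
    rw [h, degree_zero] at hdeg
    exact absurd hdeg (not_lt.2 bot_le)
  set n := g.natDegree with hn
  have hdg : g.degree = (n : WithBot ℕ) := degree_eq_natDegree hg0
  have hpos : 1 ≤ n := by
    have h0 : (0 : WithBot ℕ) < g.degree := lt_of_le_of_lt (le_max_right _ _) hdeg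
    rw [hdg] at h0
    have h1 : ((0 : ℕ) : WithBot ℕ) < (n : WithBot ℕ) := by exact_mod_cast h0
    have h2 : 0 < n := by exact_mod_cast h1
    omega
  have hfd : f.degree + 1 < (n : WithBot ℕ) := hdg ▸ lt_of_le_of_lt (le_max_left _ _) hdeg
  have hfn : f.coeff n = 0 := by
    apply coeff_eq_zero_of_degree_lt
    calc f.degree ≤ f.degree + 1 := le_add_of_nonneg_right (by exact_mod_cast Nat.zero_le 1)
      _ < (n : WithBot ℕ) := hfd
  have hfn1 : f.coeff (n - 1) = 0 := by
    apply coeff_eq_zero_of_degree_lt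
    cases hfd' : f.degree with
    | bot => exact bot_lt_iff_ne_bot.2 (by simp)
    | coe d =>
      rw [hfd'] at hfd
      have hdn : d + 1 < n := by
        simp only [Nat.cast_withBot, show ((1 : WithBot ℕ)) = WithBot.some (1 : ℕ) from rfl,
          ← WithBot.coe_add, WithBot.coe_lt_coe] at hfd
        exact hfd
      simp only [Nat.cast_withBot, WithBot.coe_lt_coe]
      omega
  -- σ' as comp
  have hform : ∀ p : Polynomial A, σ' p = taylor β (p.map (σ : A →+* A)) := by
    have hhom : (σ' : Polynomial A →+* Polynomial A) =
        eval₂RingHom (C.comp (σ : A →+* A)) (X + C β) := by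
      apply ringHom_ext
      · intro a; simp [hC a]
      · simp [hX]
    intro p
    have : σ' p = eval₂ (C.comp (σ : A →+* A)) (X + C β) p := by
      rw [show σ' p = (σ' : Polynomial A →+* Polynomial A) p from rfl, hhom]
      simp
    rw [this, taylor_apply, comp, eval₂_map]
  set m := g.map (σ : A →+* A) with hm
  have hmdeg : m.natDegree = n := natDegree_map_eq_of_injective σ.injective g
  have hcoeffm : ∀ k, m.coeff k = σ (g.coeff k) := fun k => coeff_map _ k
  -- top coefficient equation
  have htop : σ (g.coeff n) - (u : A) * g.coeff n = 0 := by
    have := congrArg (fun p => Polynomial.coeff p n) heq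
    simp only [coeff_sub, coeff_C_mul, hfn] at this
    rw [hform g, taylor_coeff, ← hmdeg, hasse_top, eval_C, hmdeg, hcoeffm] at this
    exact this
  have hgn0 : g.coeff n ≠ 0 := by
    rw [hn]; exact mt leadingCoeff_eq_zero.mp hg0
  have hσgn : σ (g.coeff n) = (u : A) * g.coeff n := by linear_combination htop
  -- second coefficient equation
  have hsub : σ (g.coeff (n - 1)) + (n : A) * σ (g.coeff n) * β
      - (u : A) * g.coeff (n - 1) = 0 := by
    have := congrArg (fun p => Polynomial.coeff p (n - 1)) heq
    simp only [coeff_sub, coeff_C_mul, hfn1] at this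
    rw [hform g, taylor_coeff, hasse_sub_one m hpos (le_of_eq hmdeg)] at this
    simp only [eval_add, eval_mul, eval_C, eval_X, hcoeffm] at this
    linear_combination this
  -- w := n * g.coeff n is a unit
  have hw0 : (n : A) * g.coeff n ≠ 0 := by
    intro h
    have hgu : IsUnit (g.coeff n) := hG _ hgn0 ⟨u, hu, hσgn⟩
    obtain ⟨v, hv⟩ := hgu
    have : (n : A) = 0 := by
      have := congrArg (fun x => x * ((v⁻¹ : Aˣ) : A)) h
      simpa [← hv, mul_assoc] using this
    exact (Nat.cast_ne_zero.2 (by omega) : (n : A) ≠ 0) this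
  have hσw : σ ((n : A) * g.coeff n) = (u : A) * ((n : A) * g.coeff n) := by
    rw [map_mul, map_natCast, hσgn]; ring
  obtain ⟨v, hv⟩ := hG _ hw0 ⟨u, hu, hσw⟩
  -- c := v⁻¹ * g.coeff (n-1)
  set c : A := ((v⁻¹ : Aˣ) : A) * g.coeff (n - 1) with hc
  have hvinv : σ ((v⁻¹ : Aˣ) : A) = ((u⁻¹ : Aˣ) : A) * ((v⁻¹ : Aˣ) : A) := by
    have h1 : ((v : A) * ((v⁻¹ : Aˣ) : A)) = 1 := by exact_mod_cast v.mul_inv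
    have h2 : σ (v : A) * σ ((v⁻¹ : Aˣ) : A) = 1 := by rw [← map_mul, h1, map_one]
    have h3 : σ (v : A) = (u : A) * (v : A) := by rw [hv, hσw, ← hv]
    have h4 : ((u⁻¹ : Aˣ) : A) * ((v⁻¹ : Aˣ) : A) * σ (v : A) = 1 := by
      rw [h3]
      calc ((u⁻¹ : Aˣ) : A) * ((v⁻¹ : Aˣ) : A) * ((u : A) * (v : A))
          = (((u⁻¹ : Aˣ) : A) * (u : A)) * (((v⁻¹ : Aˣ) : A) * (v : A)) := by ring
        _ = 1 := by rw [show ((u⁻¹ : Aˣ) : A) * (u : A) = 1 from by exact_mod_cast u.inv_mul,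
              show ((v⁻¹ : Aˣ) : A) * (v : A) = 1 from by exact_mod_cast v.inv_mul, one_mul]
    calc σ ((v⁻¹ : Aˣ) : A) = σ ((v⁻¹ : Aˣ) : A) * (((u⁻¹ : Aˣ) : A) * ((v⁻¹ : Aˣ) : A) * σ (v : A)) := by rw [h4, mul_one]
      _ = (((u⁻¹ : Aˣ) : A) * ((v⁻¹ : Aˣ) : A)) * (σ (v : A) * σ ((v⁻¹ : Aˣ) : A)) := by ring
      _ = ((u⁻¹ : Aˣ) : A) * ((v⁻¹ : Aˣ) : A) := by rw [h2, mul_one]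
  have hσc : σ c = c - β := by
    have hσn1 : σ (g.coeff (n - 1)) = (u : A) * g.coeff (n - 1)
        - (u : A) * ((n : A) * g.coeff n) * β := by
      rw [hσgn] at hsub
      linear_combination hsub
    rw [hc, map_mul, hvinv, hσn1, ← hv]
    have huu : ((u⁻¹ : Aˣ) : A) * (u : A) = 1 := by exact_mod_cast u.inv_mul
    have hvv : ((v⁻¹ : Aˣ) : A) * (v : A) = 1 := by exact_mod_cast v.inv_mul
    calc ((u⁻¹ : Aˣ) : A) * ((v⁻¹ : Aˣ) : A) * ((u : A) * g.coeff (n - 1) - (u : A) * (v : A) * β)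
        = (((u⁻¹ : Aˣ) : A) * (u : A)) * (((v⁻¹ : Aˣ) : A) * g.coeff (n - 1))
          - (((u⁻¹ : Aˣ) : A) * (u : A)) * (((v⁻¹ : Aˣ) : A) * (v : A)) * β := by ring
      _ = ((v⁻¹ : Aˣ) : A) * g.coeff (n - 1) - β := by rw [huu, hvv]; ring
  -- p := X + C c is a nonconstant constant of σ'
  have hp : σ' (X + C c) = X + C c := by
    rw [map_add, hX, hC, hσc, map_sub]
    ring
  obtain ⟨c0, _, hc0⟩ := hSigma _ hp
  have h1 : (X + C c).coeff 1 = (1 : A) := by simp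
  rw [hc0] at h1
  simp [coeff_C] at h1
end
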